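/- arXiv:2001.08932 — 5 statements merged into one kernel-verified Lean document; each statement's English description precedes it below -/
import Mathlib

section
/- Let n ≥ 1 and write n = 3^k · t with k ≥ 0 and 3 ∤ t. In the enhanced power graph of U_{6n} = ⟨a, b : a^{2n} = b^3 = e, ba = ab^{-1}⟩, a vertex x satisfies N[x] = U_{6n} (i.e., x is adjacent to every other vertex) if and only if x ∈ ⟨a^{2·3^k}⟩. -/
/-- The enhanced power graph of a group `G`: distinct `x, y` are adjacent iff they lie in a
common cyclic subgroup of `G`. -/
def enhancedPowerGraph (G : Type*) [Group G] : SimpleGraph G where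
  Adj x y := x ≠ y ∧ ∃ z : G, x ∈ Subgroup.zpowers z ∧ y ∈ Subgroup.zpowers z
  symm := by
    constructor
    rintro x y ⟨hxy, z, hx, hy⟩
    exact ⟨hxy.symm, z, hy, hx⟩
  loopless := by
    constructor
    rintro x ⟨hx, -⟩
    exact hx rfl

/-- The minimum degree of a finite graph. -/
noncomputable def minDeg {V : Type*} [Fintype V] (g : SimpleGraph V) : ℕ :=
  sInf {k | ∃ v : V, (g.neighborSet v).ncard = k}

/-- A set of vertices is independent if no two of its members are adjacent. -/
def IsIndepSet' {V : Type*} (g : SimpleGraph V) (s : Set V) : Prop :=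
  s.Pairwise fun x y => ¬ g.Adj x y

/-- The independence number. -/
noncomputable def indepNum {V : Type*} (g : SimpleGraph V) : ℕ :=
  sSup {k | ∃ s : Set V, IsIndepSet' g s ∧ s.ncard = k}

/-- A matching: a set of edges of `g`, no two of which share a vertex. -/
def IsMatching' {V : Type*} (g : SimpleGraph V) (M : Set (Sym2 V)) : Prop :=
  M ⊆ g.edgeSet ∧ M.Pairwise fun e f => ∀ v : V, v ∈ e → v ∉ f

/-- The matching number. -/
noncomputable def matchingNum {V : Type*} (g : SimpleGraph V) : ℕ :=
  sSup {k | ∃ M : Set (Sym2 V), IsMatching' g M ∧ M.ncard = k}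

/-- An edge cover: a set of edges such that every vertex is incident to some edge of it. -/
def IsEdgeCover {V : Type*} (g : SimpleGraph V) (E : Set (Sym2 V)) : Prop :=
  E ⊆ g.edgeSet ∧ ∀ v : V, ∃ e ∈ E, v ∈ e

/-- The edge covering number. -/
noncomputable def edgeCoverNum {V : Type*} (g : SimpleGraph V) : ℕ :=
  sInf {k | ∃ E : Set (Sym2 V), IsEdgeCover g E ∧ E.ncard = k}

/-- A vertex cover: a set of vertices containing an endpoint of every edge. -/
def IsVertexCover {V : Type*} (g : SimpleGraph V) (s : Set V) : Prop :=
  ∀ ⦃x y : V⦄, g.Adj x y → x ∈ s ∨ y ∈ s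

/-- The vertex covering number. -/
noncomputable def vertexCoverNum {V : Type*} (g : SimpleGraph V) : ℕ :=
  sInf {k | ∃ s : Set V, IsVertexCover g s ∧ s.ncard = k}

/-- The edge connectivity: the least size of a set of edges whose deletion disconnects. -/
noncomputable def edgeConnectivity {V : Type*} (g : SimpleGraph V) : ℕ :=
  sInf {k | ∃ S : Set (Sym2 V), S ⊆ g.edgeSet ∧ ¬ (g.deleteEdges S).Connected ∧ S.ncard = k}

/-- The strong metric dimension. -/
noncomputable def sdim {V : Type*} (g : SimpleGraph V) : ℕ :=
  sInf {k | ∃ U : Set V,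
    (∀ u v : V, u ≠ v → ∃ z ∈ U,
      g.dist z u = g.dist z v + g.dist v u ∨ g.dist z v = g.dist z u + g.dist u v) ∧
    U.ncard = k}

/-- The clique number. -/
noncomputable def cliqueNum' {V : Type*} (g : SimpleGraph V) : ℕ :=
  sSup {k | ∃ s : Finset V, g.IsNClique k s}

/-- A graph is perfect if every induced subgraph has chromatic number equal to clique number. -/
def IsPerfect {V : Type*} (g : SimpleGraph V) : Prop :=
  ∀ s : Set V, (g.induce s).chromaticNumber = (cliqueNum' (g.induce s) : ℕ∞)

/-- `H` is a maximal cyclic subgroup of `G`. -/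
def IsMaximalCyclic {G : Type*} [Group G] (H : Subgroup G) : Prop :=
  (∃ g : G, H = Subgroup.zpowers g) ∧
    ∀ K : Subgroup G, (∃ g : G, K = Subgroup.zpowers g) → H ≤ K → H = K

open scoped Pointwise

lemma aux_mem_mul_of_coprime {G : Type*} [Group G] {u v : G} (h : Commute u v)
    (hc : Nat.Coprime (orderOf u) (orderOf v)) :
    u ∈ Subgroup.zpowers (u * v) ∧ v ∈ Subgroup.zpowers (u * v) := by
  obtain ⟨e, he1, he2⟩ := Nat.chineseRemainder hc 0 1
  have hv : (u * v) ^ e = v := by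
    rw [h.mul_pow]
    have h1 : u ^ e = u ^ 0 := pow_eq_pow_iff_modEq.mpr he1
    have h2 : v ^ e = v ^ 1 := pow_eq_pow_iff_modEq.mpr he2
    rw [h1, h2, pow_zero, pow_one, one_mul]
  have hvm : v ∈ Subgroup.zpowers (u * v) := by
    have h3 := Subgroup.pow_mem _ (Subgroup.mem_zpowers (u * v)) e
    rwa [hv] at h3
  refine ⟨?_, hvm⟩
  have hu : (u * v) * v⁻¹ ∈ Subgroup.zpowers (u * v) :=
    Subgroup.mul_mem _ (Subgroup.mem_zpowers (u * v)) (Subgroup.inv_mem _ hvm)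
  simpa using hu

/-- In the enhanced power graph of `U_{6n}` (`n = 3^k·t`, `3 ∤ t`),
a vertex `x` satisfies `N[x] = U_{6n}` (it is adjacent to every other vertex) if and only if
`x ∈ ⟨a^{2·3^k}⟩`. -/
theorem stmt_13 {G : Type*} [Group G] [Fintype G] (n k t : ℕ) (hn : 1 ≤ n)
    (hnkt : n = 3 ^ k * t) (h3t : ¬ 3 ∣ t)
    (a b : G) (ha : a ^ (2 * n) = 1) (hb : b ^ 3 = 1) (hba : b * a = a * b⁻¹)
    (hcard : Fintype.card G = 6 * n) (hgen : Subgroup.closure {a, b} = ⊤) :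
    ∀ x : G, (∀ y : G, y ≠ x → (enhancedPowerGraph G).Adj x y) ↔
      x ∈ Subgroup.zpowers (a ^ (2 * 3 ^ k)) := by
  classical
  have h2n0 : 0 < 2 * n := by omega
  have ht0 : t ≠ 0 := by rintro rfl; exact h3t ⟨0, rfl⟩
  have hcardG : Nat.card G = 6 * n := by rw [Nat.card_eq_fintype_card, hcard]
  have hpow2 : ∀ m : ℤ, (a ^ (2:ℕ)) ^ m = a ^ (2 * m) := by
    intro m
    rw [← zpow_natCast a 2, ← zpow_mul]
    norm_num
  have hb1 : b ≠ 1 := by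
    intro h
    have htop : (⊤ : Subgroup G) ≤ Subgroup.zpowers a := by
      rw [← hgen, Subgroup.closure_le, Set.insert_subset_iff, Set.singleton_subset_iff]
      refine ⟨Subgroup.mem_zpowers a, ?_⟩
      rw [h]
      exact Subgroup.one_mem _
    have h1 : Nat.card G ≤ orderOf a := by
      rw [← Nat.card_zpowers]
      calc Nat.card G = Nat.card (⊤ : Subgroup G) := (Subgroup.card_top).symm
        _ ≤ Nat.card (Subgroup.zpowers a) := Subgroup.card_le_of_le htop
    have h2 : orderOf a ≤ 2 * n := Nat.le_of_dvd h2n0 (orderOf_dvd_of_pow_eq_one ha)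
    omega
  have horb : orderOf b = 3 := by
    have h1 : orderOf b ∣ 3 := orderOf_dvd_of_pow_eq_one hb
    rcases (Nat.Prime.eq_one_or_self_of_dvd Nat.prime_three _ h1) with h2 | h2
    · exact absurd (orderOf_eq_one_iff.mp h2) hb1
    · exact h2
  have hbsq : b ^ (2:ℕ) ≠ 1 := by
    intro h
    have h1 := orderOf_dvd_of_pow_eq_one h
    rw [horb] at h1
    omega
  have hncomm : ¬ Commute a b := by
    intro h
    have h1 : b = b⁻¹ := by
      apply mul_left_cancel (a := a)
      rw [h.eq, hba]
    apply hbsq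
    rw [pow_two]
    nth_rewrite 2 [h1]
    exact mul_inv_cancel b
  have hconjL : a⁻¹ * b * a = b⁻¹ := by
    rw [mul_assoc, hba, ← mul_assoc, inv_mul_cancel, one_mul]
  have hconjR : a * b * a⁻¹ = b⁻¹ := by
    have h1 : a * b⁻¹ * a⁻¹ = b := by
      rw [← hconjL]; group
    calc a * b * a⁻¹ = (a * b⁻¹ * a⁻¹)⁻¹ := by group
      _ = b⁻¹ := by rw [h1]
  have hconjRz : ∀ j : ℤ, a * b ^ j * a⁻¹ = b ^ (-j) := by
    intro j
    rw [← conj_zpow, hconjR, inv_zpow, ← zpow_neg]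
  have hconjLz : ∀ j : ℤ, a⁻¹ * b ^ j * a = b ^ (-j) := by
    intro j
    have h1 : a⁻¹ * b ^ j * (a⁻¹)⁻¹ = b ^ (-j) := by
      rw [← conj_zpow, inv_inv, hconjL, inv_zpow, ← zpow_neg]
    rwa [inv_inv] at h1
  -- a^2 is central
  have hcent : ∀ g : G, Commute (a ^ (2:ℕ)) g := by
    have hc2 : Commute (a ^ (2:ℕ)) b := by
      show a ^ (2:ℕ) * b = b * a ^ (2:ℕ)
      have h1 : a * b = b⁻¹ * a := by
        rw [← hconjR]; group
      have h2 : a * b⁻¹ = b * a := hba.symm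
      calc a ^ (2:ℕ) * b = a * (a * b) := by rw [pow_two, mul_assoc]
        _ = a * (b⁻¹ * a) := by rw [h1]
        _ = (a * b⁻¹) * a := by rw [mul_assoc]
        _ = b * a * a := by rw [h2]
        _ = b * a ^ (2:ℕ) := by rw [pow_two, mul_assoc]
    have hle : Subgroup.closure ({a, b} : Set G) ≤ Subgroup.centralizer {a ^ (2:ℕ)} := by
      rw [Subgroup.closure_le, Set.insert_subset_iff, Set.singleton_subset_iff]
      constructor
      · rw [SetLike.mem_coe, Subgroup.mem_centralizer_iff]
        rintro h (rfl : h = a ^ (2:ℕ))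
        exact ((Commute.refl a).pow_left 2).eq
      · rw [SetLike.mem_coe, Subgroup.mem_centralizer_iff]
        rintro h (rfl : h = a ^ (2:ℕ))
        exact hc2.eq
    intro g
    have hg : g ∈ Subgroup.centralizer {a ^ (2:ℕ)} := by
      apply hle
      rw [hgen]; trivial
    exact Subgroup.mem_centralizer_iff.mp hg _ rfl
  -- zpowers b is normal
  set N := Subgroup.zpowers b with hNdef
  have hNnormal : N.Normal := by
    rw [← Subgroup.normalizer_eq_top_iff]
    apply le_antisymm le_top
    rw [← hgen, Subgroup.closure_le, Set.insert_subset_iff, Set.singleton_subset_iff]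
    constructor
    · rw [SetLike.mem_coe, Subgroup.mem_normalizer_iff]
      intro h
      constructor
      · intro hh
        obtain ⟨j, hj⟩ := Subgroup.mem_zpowers_iff.mp hh
        rw [← hj, hconjRz]
        exact Subgroup.mem_zpowers_iff.mpr ⟨-j, rfl⟩
      · intro hh
        obtain ⟨j, hj⟩ := Subgroup.mem_zpowers_iff.mp hh
        have hhh : h = a⁻¹ * b ^ j * a := by rw [hj]; group
        rw [hhh, hconjLz]
        exact Subgroup.mem_zpowers_iff.mpr ⟨-j, rfl⟩
    · exact Subgroup.le_normalizer (Subgroup.mem_zpowers b)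
  have htopNH : N ⊔ Subgroup.zpowers a = ⊤ := by
    apply le_antisymm le_top
    rw [← hgen, Subgroup.closure_le, Set.insert_subset_iff, Set.singleton_subset_iff]
    exact ⟨Subgroup.mem_sup_right (Subgroup.mem_zpowers a),
      Subgroup.mem_sup_left (Subgroup.mem_zpowers b)⟩
  have hdec : ∀ g : G, ∃ j i : ℤ, g = b ^ j * a ^ i := by
    intro g
    have hg : g ∈ (((N : Set G) * (Subgroup.zpowers a : Set G)) : Set G) := by
      rw [← Subgroup.normal_mul, htopNH]
      simp
    obtain ⟨u, hu, v, hv, huv⟩ := hg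
    obtain ⟨j, hj⟩ := Subgroup.mem_zpowers_iff.mp hu
    obtain ⟨i, hi⟩ := Subgroup.mem_zpowers_iff.mp hv
    exact ⟨j, i, by rw [← huv, ← hj, ← hi]⟩
  have horda : orderOf a = 2 * n := by
    have hda : orderOf a ∣ 2 * n := orderOf_dvd_of_pow_eq_one ha
    have hle2 : orderOf a ≤ 2 * n := Nat.le_of_dvd h2n0 hda
    have h1 : Nat.card (((N : Set G) * (Subgroup.zpowers a : Set G)) : Set G)
        ≤ Nat.card N * Nat.card (Subgroup.zpowers a) := Set.natCard_mul_le
    have h2 : ((N : Set G) * (Subgroup.zpowers a : Set G)) = Set.univ := by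
      rw [← Subgroup.normal_mul, htopNH, Subgroup.coe_top]
    rw [h2, Nat.card_univ, hcardG, hNdef, Nat.card_zpowers, Nat.card_zpowers, horb] at h1
    omega
  have hNH : ∀ g : G, g ∈ N → g ∈ Subgroup.zpowers a → g = 1 := by
    intro g hgN hga
    obtain ⟨j, hj⟩ := Subgroup.mem_zpowers_iff.mp hgN
    have hb3 : b ^ (3:ℤ) = 1 := by
      rw [show (3:ℤ) = ((3:ℕ):ℤ) by norm_num, zpow_natCast, hb]
    have hmod : b ^ j = b ^ (j % 3) := by
      conv_lhs => rw [show j = 3 * (j / 3) + j % 3 by omega]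
      rw [zpow_add, zpow_mul, hb3, one_zpow, one_mul]
    have h0 : 0 ≤ j % 3 := Int.emod_nonneg j (by norm_num)
    have h3 : j % 3 < 3 := Int.emod_lt_of_pos j (by norm_num)
    rw [← hj] at hga ⊢
    have hcases : j % 3 = 0 ∨ j % 3 = 1 ∨ j % 3 = 2 := by omega
    rcases hcases with h | h | h
    · rw [hmod, h]
      exact zpow_zero b
    · exfalso
      apply hncomm
      have hbj : b ^ j = b := by rw [hmod, h, zpow_one]
      rw [hbj] at hga
      obtain ⟨m, hm⟩ := Subgroup.mem_zpowers_iff.mp hga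
      rw [← hm]
      exact (Commute.refl a).zpow_right m
    · exfalso
      apply hncomm
      have hbj : b ^ j = b ^ (2:ℤ) := by rw [hmod, h]
      have hbb : b = (b ^ j) ^ (2:ℤ) := by
        rw [hbj, ← zpow_mul, show (2:ℤ) * 2 = 3 + 1 by norm_num, zpow_add, hb3,
          one_mul, zpow_one]
      have hmem : (b ^ j) ^ (2:ℤ) ∈ Subgroup.zpowers a := Subgroup.zpow_mem _ hga 2
      rw [← hbb] at hmem
      obtain ⟨m2, hm2⟩ := Subgroup.mem_zpowers_iff.mp hmem
      rw [← hm2]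
      exact (Commute.refl a).zpow_right m2
  -- the abelian subgroup A
  set H2 := Subgroup.zpowers (a ^ (2:ℕ)) with hH2def
  set A := N ⊔ H2 with hAdef
  have hAdec : ∀ g ∈ A, ∃ j m : ℤ, g = b ^ j * (a ^ (2:ℕ)) ^ m := by
    intro g hg
    have hg' : g ∈ (((N : Set G) * (H2 : Set G)) : Set G) := by
      rw [← Subgroup.normal_mul]
      exact hg
    obtain ⟨u, hu, v, hv, huv⟩ := hg'
    obtain ⟨j, hj⟩ := Subgroup.mem_zpowers_iff.mp hu
    obtain ⟨m, hm⟩ := Subgroup.mem_zpowers_iff.mp hv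
    exact ⟨j, m, by rw [← huv, ← hj, ← hm]⟩
  have hparity : ∀ i : ℤ, a ^ i ∈ A → (2:ℤ) ∣ i := by
    intro i hi
    obtain ⟨j, m, hjm⟩ := hAdec _ hi
    have hbj : b ^ j = a ^ (i - 2 * m) := by
      have h0 : b ^ j = a ^ i * ((a ^ (2:ℕ)) ^ m)⁻¹ := by
        rw [hjm]; group
      rw [hpow2, ← zpow_neg, ← zpow_add] at h0
      rw [sub_eq_add_neg]
      exact h0
    have hj1 : b ^ j = 1 := hNH _ (Subgroup.mem_zpowers_iff.mpr ⟨j, rfl⟩)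
      (Subgroup.mem_zpowers_iff.mpr ⟨i - 2 * m, hbj.symm⟩)
    have h1 : a ^ (i - 2 * m) = 1 := by rw [← hbj, hj1]
    have h2 : ((2 * n : ℕ) : ℤ) ∣ (i - 2 * m) := by
      rw [← horda]
      exact orderOf_dvd_iff_zpow_eq_one.mpr h1
    have h3 : (2:ℤ) ∣ (i - 2 * m) := dvd_trans (by push_cast; exact ⟨n, by ring⟩) h2
    omega
  have ha2ord : orderOf (a ^ (2:ℕ)) = n := by
    rw [orderOf_pow, horda]
    have hg2 : Nat.gcd (2 * n) 2 = 2 := Nat.gcd_eq_right ⟨n, rfl⟩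
    rw [hg2]
    omega
  have hA3n : ∀ g ∈ A, g ^ (3 * (n:ℤ)) = 1 := by
    intro g hg
    obtain ⟨j, m, rfl⟩ := hAdec _ hg
    have hcomm : Commute (b ^ j) ((a ^ (2:ℕ)) ^ m) :=
      ((hcent (b ^ j)).symm.zpow_right m)
    rw [hcomm.mul_zpow, ← zpow_mul, ← zpow_mul]
    have e1 : b ^ (j * (3 * (n:ℤ))) = 1 := by
      apply orderOf_dvd_iff_zpow_eq_one.mp
      rw [horb]
      exact ⟨j * n, by push_cast; ring⟩
    have e2 : (a ^ (2:ℕ)) ^ (m * (3 * (n:ℤ))) = 1 := by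
      apply orderOf_dvd_iff_zpow_eq_one.mp
      rw [ha2ord]
      exact ⟨m * 3, by push_cast; ring⟩
    rw [e1, e2, one_mul]
  have hc_def : a ^ (2 * 3 ^ k) = (a ^ (2:ℕ)) ^ (3 ^ k : ℕ) := by
    rw [← pow_mul]
  have hcord : orderOf (a ^ (2 * 3 ^ k)) ∣ t := by
    apply orderOf_dvd_of_pow_eq_one
    rw [← pow_mul, show 2 * 3 ^ k * t = 2 * n by rw [hnkt]; ring, ha]
  have hAT : ∀ g ∈ A, g ^ (t:ℤ) = 1 → g ∈ Subgroup.zpowers (a ^ (2 * 3 ^ k)) := by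
    intro g hg hgt
    obtain ⟨j, m, rfl⟩ := hAdec _ hg
    have hcomm : Commute (b ^ j) ((a ^ (2:ℕ)) ^ m) :=
      ((hcent (b ^ j)).symm.zpow_right m)
    rw [hcomm.mul_zpow] at hgt
    have hmem : (b ^ j) ^ (t:ℤ) ∈ Subgroup.zpowers a := by
      have h1 : (b ^ j) ^ (t:ℤ) = (((a ^ (2:ℕ)) ^ m) ^ (t:ℤ))⁻¹ := by
        rw [eq_inv_iff_mul_eq_one]
        exact hgt
      rw [h1, ← zpow_mul, hpow2, ← zpow_neg]
      exact Subgroup.mem_zpowers_iff.mpr ⟨-(2 * (m * t)), rfl⟩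
    have hbjt : (b ^ j) ^ (t:ℤ) = 1 := by
      apply hNH
      · rw [← zpow_mul]
        exact Subgroup.mem_zpowers_iff.mpr ⟨j * t, rfl⟩
      · exact hmem
    have h3j : (3:ℤ) ∣ j := by
      have hd : ((3:ℕ):ℤ) ∣ j * t := by
        rw [← horb]
        apply orderOf_dvd_iff_zpow_eq_one.mpr
        rw [zpow_mul]
        exact hbjt
      have h3p : Prime (3:ℤ) := Int.prime_three
      rcases h3p.dvd_mul.mp (by exact_mod_cast hd) with h | h
      · exact h
      · exact absurd (by exact_mod_cast h) h3t
    have hbj1 : b ^ j = 1 := by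
      obtain ⟨q, rfl⟩ := h3j
      have hb3 : b ^ (3:ℤ) = 1 := by
        rw [show (3:ℤ) = ((3:ℕ):ℤ) by norm_num, zpow_natCast, hb]
      rw [zpow_mul, hb3, one_zpow]
    rw [hbjt, one_mul] at hgt
    rw [hbj1, one_mul]
    have hmt : ((n:ℕ):ℤ) ∣ m * t := by
      rw [← ha2ord]
      apply orderOf_dvd_iff_zpow_eq_one.mpr
      rw [zpow_mul]
      exact hgt
    have h3km : ((3 ^ k : ℕ):ℤ) ∣ m := by
      have h2 : ((3 ^ k : ℕ):ℤ) * (t:ℤ) ∣ m * (t:ℤ) := by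
        have h3 : ((n:ℕ):ℤ) = ((3 ^ k : ℕ):ℤ) * (t:ℤ) := by push_cast [hnkt]; ring
        rwa [h3] at hmt
      exact (mul_dvd_mul_iff_right (by exact_mod_cast ht0 : (t:ℤ) ≠ 0)).mp h2
    obtain ⟨q, hq⟩ := h3km
    apply Subgroup.mem_zpowers_iff.mpr
    refine ⟨q, ?_⟩
    rw [hc_def, ← zpow_natCast ((a ^ (2:ℕ))) (3 ^ k), ← zpow_mul, ← hq]
  -- odd conjugation
  have hocj : ∀ (i j : ℤ), ¬ (2:ℤ) ∣ i → a ^ i * b ^ j = b ^ (-j) * a ^ i := by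
    intro i j hodd
    obtain ⟨m, hm⟩ : ∃ m : ℤ, i = 2 * m + 1 := ⟨(i - 1) / 2, by omega⟩
    have h1 : a * b ^ j = b ^ (-j) * a := by
      rw [← hconjRz j]; group
    have h2 : (a ^ (2:ℕ)) ^ m * b ^ (-j) = b ^ (-j) * (a ^ (2:ℕ)) ^ m :=
      (((hcent (b ^ (-j))).symm.zpow_right m).symm).eq
    calc a ^ i * b ^ j = (a ^ (2:ℕ)) ^ m * (a * b ^ j) := by
          rw [hpow2, hm, zpow_add, zpow_one, mul_assoc]
      _ = (a ^ (2:ℕ)) ^ m * (b ^ (-j) * a) := by rw [h1]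
      _ = ((a ^ (2:ℕ)) ^ m * b ^ (-j)) * a := by rw [mul_assoc]
      _ = (b ^ (-j) * (a ^ (2:ℕ)) ^ m) * a := by rw [h2]
      _ = b ^ (-j) * a ^ i := by rw [hpow2, hm, mul_assoc, ← zpow_add_one]
  intro x
  constructor
  · -- forward direction
    intro hdom
    have hxa : x ∈ Subgroup.zpowers a := by
      by_cases hax : a = x
      · rw [← hax]
        exact Subgroup.mem_zpowers a
      · obtain ⟨-, z, hxz, haz⟩ := hdom a hax
        have hle : Subgroup.zpowers a ≤ Subgroup.zpowers z := Subgroup.zpowers_le.mpr haz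
        have h2nd : orderOf a ∣ orderOf z := orderOf_dvd_of_mem_zpowers haz
        have hz6 : orderOf z ∣ 6 * n := by
          rw [← hcardG]
          exact orderOf_dvd_natCard z
        obtain ⟨s', hs'⟩ := h2nd
        have hs3 : s' ∣ 3 := by
          have h1 : 2 * n * s' ∣ 2 * n * 3 := by
            have h2 : orderOf z = 2 * n * s' := by rw [hs', horda]
            rw [← h2, show 2 * n * 3 = 6 * n by ring]
            exact hz6
          exact (Nat.mul_dvd_mul_iff_left h2n0).mp h1
        rcases (Nat.Prime.eq_one_or_self_of_dvd Nat.prime_three s' hs3) with h1 | h1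
        · have heq : Subgroup.zpowers a = Subgroup.zpowers z := by
            apply Subgroup.eq_of_le_of_card_ge hle
            rw [Nat.card_zpowers, Nat.card_zpowers, hs', h1, mul_one]
          rw [heq]
          exact hxz
        · exfalso
          have htopz : Subgroup.zpowers z = ⊤ := by
            apply Subgroup.eq_top_of_card_eq
            rw [Nat.card_zpowers, hs', h1, horda, hcardG]
            ring
          have hbz : b ∈ Subgroup.zpowers z := by rw [htopz]; trivial
          obtain ⟨m1, hm1⟩ := Subgroup.mem_zpowers_iff.mp haz
          obtain ⟨m2, hm2⟩ := Subgroup.mem_zpowers_iff.mp hbz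
          apply hncomm
          rw [← hm1, ← hm2]
          exact ((Commute.refl z).zpow_left m1).zpow_right m2
    have hxbne : b ≠ x := by
      intro h
      obtain ⟨m, hm⟩ := Subgroup.mem_zpowers_iff.mp hxa
      apply hncomm
      rw [← h] at hm
      rw [← hm]
      exact (Commute.refl a).zpow_right m
    obtain ⟨-, z, hxz, hbz⟩ := hdom b hxbne
    have hzA : z ∈ A := by
      obtain ⟨j, i, rfl⟩ := hdec z
      by_cases h2i : (2:ℤ) ∣ i
      · obtain ⟨m, rfl⟩ := h2i
        apply Subgroup.mul_mem
        · exact Subgroup.mem_sup_left (Subgroup.mem_zpowers_iff.mpr ⟨j, rfl⟩)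
        · exact Subgroup.mem_sup_right (Subgroup.mem_zpowers_iff.mpr ⟨m, hpow2 m⟩)
      · exfalso
        have hzb : Commute (b ^ j * a ^ i) b := by
          obtain ⟨mb, hmb⟩ := Subgroup.mem_zpowers_iff.mp hbz
          have h := (Commute.refl (b ^ j * a ^ i)).zpow_right mb
          rwa [hmb] at h
        have hoc1 : a ^ i * b = b⁻¹ * a ^ i := by
          have h := hocj i 1 h2i
          rwa [zpow_one, zpow_neg_one] at h
        have hlhs : (b ^ j * a ^ i) * b = b ^ (j - 1) * a ^ i := by
          rw [mul_assoc, hoc1, ← mul_assoc, ← zpow_sub_one]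
        have hrhs : b * (b ^ j * a ^ i) = b ^ (1 + j) * a ^ i := by
          rw [← mul_assoc, ← zpow_one_add]
        have h1 : b ^ (j - 1) * a ^ i = b ^ (1 + j) * a ^ i := by
          rw [← hlhs, ← hrhs, hzb.eq]
        have h2 : b ^ (j - (1:ℤ)) = b ^ (1 + j) := mul_right_cancel h1
        apply hbsq
        have h3 : b ^ ((2:ℤ)) = 1 := by
          rw [show (2:ℤ) = (1 + j) - (j - 1) by ring, zpow_sub, ← h2, mul_inv_cancel]
        rw [← zpow_natCast b 2]
        exact_mod_cast h3
    have hxA : x ∈ A := (Subgroup.zpowers_le.mpr hzA) hxz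
    obtain ⟨ix, hix⟩ := Subgroup.mem_zpowers_iff.mp hxa
    have h2ix : (2:ℤ) ∣ ix := hparity ix (by rw [hix]; exact hxA)
    obtain ⟨mx, hmx⟩ := h2ix
    have hxH2 : x = (a ^ (2:ℕ)) ^ mx := by rw [← hix, hmx, hpow2]
    have hxord_n : orderOf x ∣ n := by
      rw [← ha2ord]
      apply orderOf_dvd_of_mem_zpowers
      exact Subgroup.mem_zpowers_iff.mpr ⟨mx, hxH2.symm⟩
    by_cases h3x : 3 ∣ orderOf x
    · exfalso
      have hd0 : orderOf x ≠ 0 := (orderOf_pos x).ne'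
      have hdiv3 : orderOf x / 3 ≠ 0 := by
        have h3le : 3 ≤ orderOf x := Nat.le_of_dvd (Nat.pos_of_ne_zero hd0) h3x
        omega
      set x3 := x ^ (orderOf x / 3) with hx3
      have hx3ord : orderOf x3 = 3 := by
        rw [hx3, orderOf_pow' x hdiv3, Nat.gcd_eq_right (Nat.div_dvd_of_dvd h3x)]
        exact Nat.div_div_self h3x hd0
      have hx3_1 : x3 ^ (3:ℕ) = 1 := by
        rw [← hx3ord]
        exact pow_orderOf_eq_one x3
      set M := orderOf z with hM
      have h3M : 3 ∣ M := by
        rw [← horb, hM]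
        exact orderOf_dvd_of_mem_zpowers hbz
      have key : ∀ g, g ∈ Subgroup.zpowers z → g ^ (3:ℕ) = 1 →
          g ∈ Subgroup.zpowers (z ^ (M / 3)) := by
        intro g hgz hg1
        obtain ⟨m, hm⟩ := Subgroup.mem_zpowers_iff.mp hgz
        have h2 : z ^ (m * (3:ℤ)) = 1 := by
          rw [zpow_mul, show ((3:ℤ)) = ((3:ℕ):ℤ) by norm_num, zpow_natCast, hm, hg1]
        have h3 : ((M:ℕ):ℤ) ∣ m * 3 := by
          rw [hM]
          exact orderOf_dvd_iff_zpow_eq_one.mpr h2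
        have h4 : ((M / 3 : ℕ):ℤ) ∣ m := by
          have hM3 : ((M:ℕ):ℤ) = 3 * ((M / 3 : ℕ):ℤ) := by
            have h6 : M = 3 * (M / 3) := (Nat.mul_div_cancel' h3M).symm
            exact_mod_cast h6
          rw [hM3] at h3
          have h5 : 3 * ((M / 3 : ℕ):ℤ) ∣ 3 * m := by
            rw [show (3:ℤ) * m = m * 3 by ring]
            exact h3
          exact (mul_dvd_mul_iff_left (by norm_num : (3:ℤ) ≠ 0)).mp h5
        obtain ⟨q, hq⟩ := h4
        apply Subgroup.mem_zpowers_iff.mpr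
        refine ⟨q, ?_⟩
        rw [← zpow_natCast z (M / 3), ← zpow_mul, ← hq, hm]
      have hbw := key b hbz hb
      have hx3z : x3 ∈ Subgroup.zpowers z := Subgroup.pow_mem _ hxz _
      have hx3w := key x3 hx3z hx3_1
      set w := z ^ (M / 3) with hw
      have hw3 : w ^ (3:ℕ) = 1 := by
        rw [hw, ← pow_mul, Nat.div_mul_cancel h3M, hM]
        exact pow_orderOf_eq_one z
      have hw3z : w ^ (3:ℤ) = 1 := by
        rw [show (3:ℤ) = ((3:ℕ):ℤ) by norm_num, zpow_natCast, hw3]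
      obtain ⟨mb', hmb'⟩ := Subgroup.mem_zpowers_iff.mp hbw
      have h3mb : ¬ (3:ℤ) ∣ mb' := by
        rintro ⟨q, rfl⟩
        apply hb1
        rw [← hmb', zpow_mul, hw3z, one_zpow]
      have hwb : w ∈ N := by
        have hgcd : Int.gcd 3 mb' = 1 := by
          have hd3 : (Int.gcd 3 mb') ∣ 3 := by
            have h := Int.gcd_dvd_left (a := (3:ℤ)) (b := mb')
            exact_mod_cast h
          rcases (Nat.Prime.eq_one_or_self_of_dvd Nat.prime_three _ hd3) with h | h
          · exact h
          · exfalso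
            apply h3mb
            have h2 := Int.gcd_dvd_right (a := (3:ℤ)) (b := mb')
            rw [h] at h2
            exact_mod_cast h2
        obtain ⟨α, β, hαβ⟩ := Int.isCoprime_iff_gcd_eq_one.mpr hgcd
        apply Subgroup.mem_zpowers_iff.mpr
        refine ⟨β, ?_⟩
        have h7 : w ^ (α * 3) = 1 := by
          rw [mul_comm, zpow_mul, hw3z, one_zpow]
        calc b ^ β = (w ^ mb') ^ β := by rw [hmb']
          _ = w ^ (mb' * β) := by rw [← zpow_mul]
          _ = w ^ (α * 3) * w ^ (mb' * β) := by rw [h7, one_mul]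
          _ = w ^ (α * 3 + β * mb') := by
              rw [← zpow_add]
              congr 1
              ring
          _ = w := by rw [hαβ, zpow_one]
      have hx3b : x3 ∈ N := by
        obtain ⟨mx', hmx'⟩ := Subgroup.mem_zpowers_iff.mp hx3w
        rw [← hmx']
        exact Subgroup.zpow_mem _ hwb mx'
      have hx3a : x3 ∈ Subgroup.zpowers a :=
        Subgroup.pow_mem _ (Subgroup.mem_zpowers_iff.mpr ⟨ix, hix⟩) _
      have hx31 : x3 = 1 := hNH x3 hx3b hx3a
      rw [hx31, orderOf_one] at hx3ord
      omega
    · have hcop3 : Nat.Coprime (orderOf x) (3 ^ k) :=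
        Nat.Coprime.pow_right k
          (Nat.coprime_comm.mp ((Nat.Prime.coprime_iff_not_dvd Nat.prime_three).mpr h3x))
      have hxt : orderOf x ∣ t := by
        apply Nat.Coprime.dvd_of_dvd_mul_left hcop3
        rw [← hnkt]
        exact hxord_n
      have hxt1 : x ^ (t:ℤ) = 1 := by
        rw [zpow_natCast]
        exact orderOf_dvd_iff_pow_eq_one.mp hxt
      exact hAT x hxA hxt1
  · -- backward direction
    intro hxT y hyx
    refine ⟨hyx.symm, ?_⟩
    obtain ⟨s, hs⟩ := Subgroup.mem_zpowers_iff.mp hxT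
    by_cases hyA : y ∈ A
    · -- even case
      have hcop0 : Nat.Coprime (3 ^ (k + 1)) t := by
        apply Nat.Coprime.pow_left
        exact (Nat.Prime.coprime_iff_not_dvd Nat.prime_three).mpr h3t
      obtain ⟨α, β, hαβ⟩ : ∃ α β : ℤ, α * t + β * 3 ^ (k + 1) = 1 := by
        have h1 : IsCoprime ((t:ℕ):ℤ) ((3 ^ (k+1) : ℕ):ℤ) := by
          rw [Int.isCoprime_iff_gcd_eq_one, Int.gcd_natCast_natCast]
          exact Nat.coprime_comm.mp hcop0
        obtain ⟨α, β, h⟩ := h1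
        refine ⟨α, β, ?_⟩
        push_cast at h ⊢
        linarith [h]
      have hn' : ((n:ℕ):ℤ) = 3 ^ k * (t:ℤ) := by push_cast [hnkt]; ring
      have hy3n : y ^ (3 * (n:ℤ)) = 1 := hA3n y hyA
      have hkill : ∀ (g : G) (L : ℤ), g ^ (3 * (n:ℤ)) = 1 → (3 * (n:ℤ)) ∣ L → g ^ L = 1 := by
        rintro g L h1 ⟨q, rfl⟩
        rw [zpow_mul, h1, one_zpow]
      have hy3pow : (y ^ (α * t)) ^ ((3 ^ (k + 1) : ℕ)) = 1 := by
        rw [← zpow_natCast (y ^ (α * t)) (3 ^ (k+1)), ← zpow_mul]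
        apply hkill y _ hy3n
        refine ⟨α, ?_⟩
        rw [hn']
        push_cast
        ring
      have hordy3 : orderOf (y ^ (α * t)) ∣ 3 ^ (k + 1) := orderOf_dvd_of_pow_eq_one hy3pow
      have hy't : (y ^ (1 - α * t)) ^ (t:ℤ) = 1 := by
        rw [← zpow_mul]
        apply hkill y _ hy3n
        refine ⟨β, ?_⟩
        have h1 : (1:ℤ) - α * t = β * 3 ^ (k + 1) := by linarith [hαβ]
        rw [h1, hn']
        ring
      have hy'A : y ^ ((1:ℤ) - α * t) ∈ A := Subgroup.zpow_mem _ hyA _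
      have hy'T : y ^ ((1:ℤ) - α * t) ∈ Subgroup.zpowers (a ^ (2 * 3 ^ k)) :=
        hAT _ hy'A hy't
      have hcomm : Commute (y ^ (α * (t:ℤ))) (a ^ (2 * 3 ^ k)) := by
        rw [hc_def]
        exact ((hcent (y ^ (α * (t:ℤ)))).symm.pow_right (3 ^ k))
      have hcop : Nat.Coprime (orderOf (y ^ (α * (t:ℤ)))) (orderOf (a ^ (2 * 3 ^ k))) :=
        Nat.Coprime.coprime_dvd_right hcord
          (Nat.Coprime.coprime_dvd_left hordy3 hcop0)
      obtain ⟨hy3m, hcm⟩ := aux_mem_mul_of_coprime hcomm hcop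
      refine ⟨y ^ (α * (t:ℤ)) * a ^ (2 * 3 ^ k), ?_, ?_⟩
      · rw [← hs]
        exact Subgroup.zpow_mem _ hcm s
      · have hy_split : y = y ^ (α * (t:ℤ)) * y ^ ((1:ℤ) - α * t) := by
          rw [← zpow_add, show α * (t:ℤ) + (1 - α * t) = 1 by ring, zpow_one]
        have hmem2 := Subgroup.mul_mem _ hy3m ((Subgroup.zpowers_le.mpr hcm) hy'T)
        rwa [← hy_split] at hmem2
    · -- odd case
      obtain ⟨j, i, rfl⟩ := hdec y
      have hodd : ¬ (2:ℤ) ∣ i := by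
        rintro ⟨m, rfl⟩
        apply hyA
        apply Subgroup.mul_mem
        · exact Subgroup.mem_sup_left (Subgroup.mem_zpowers_iff.mpr ⟨j, rfl⟩)
        · exact Subgroup.mem_sup_right (Subgroup.mem_zpowers_iff.mpr ⟨m, hpow2 m⟩)
      have hsq : (b ^ j * a ^ i) * (b ^ j * a ^ i) = (a ^ (2:ℕ)) ^ i := by
        calc (b ^ j * a ^ i) * (b ^ j * a ^ i)
            = b ^ j * (a ^ i * b ^ j) * a ^ i := by group
          _ = b ^ j * (b ^ (-j) * a ^ i) * a ^ i := by rw [hocj i j hodd]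
          _ = (a ^ (2:ℕ)) ^ i := by
              rw [hpow2]
              calc b ^ j * (b ^ (-j) * a ^ i) * a ^ i
                  = (b ^ j * b ^ (-j)) * (a ^ i * a ^ i) := by group
                _ = a ^ (2 * i) := by
                    rw [← zpow_add, add_neg_cancel, zpow_zero, one_mul, ← zpow_add]
                    congr 1
                    ring
      have hxK : x = (a ^ (2:ℕ)) ^ ((3 ^ k : ℤ) * s) := by
        rw [← hs, hc_def, ← zpow_natCast ((a ^ (2:ℕ))) (3 ^ k), ← zpow_mul]
        congr 2
      set K : ℤ := (3 ^ k : ℤ) * s with hK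
      set h0 : ℕ := Int.gcd ((Int.gcd i K : ℕ) : ℤ) ((n:ℕ):ℤ) with hh0
      have hd_i : (h0:ℤ) ∣ i :=
        dvd_trans (Int.gcd_dvd_left _ _) (Int.gcd_dvd_left _ _)
      have hd_K : (h0:ℤ) ∣ K :=
        dvd_trans (Int.gcd_dvd_left _ _) (Int.gcd_dvd_right _ _)
      obtain ⟨r, hr⟩ := hd_i
      have hodd_r : ¬ (2:ℤ) ∣ r := by
        rintro ⟨q, rfl⟩
        exact hodd ⟨h0 * q, by rw [hr]; ring⟩
      obtain ⟨u, hu⟩ : ∃ u : ℤ, 2 * u = 1 - r := by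
        refine ⟨(1 - r) / 2, ?_⟩
        omega
      set w := (a ^ (2:ℕ)) ^ ((h0:ℕ):ℤ) with hwdef
      set z := (b ^ j * a ^ i) * w ^ u with hz
      have hcw : Commute (b ^ j * a ^ i) (w ^ u) := by
        rw [hwdef]
        exact (((hcent (b ^ j * a ^ i)).symm.zpow_right _).zpow_right u)
      have hz2 : z * z = w := by
        rw [hz, hcw.symm.mul_mul_mul_comm, hsq, hwdef, ← zpow_add, ← zpow_mul,
          ← zpow_add]
        congr 1
        rw [hr]
        linear_combination ((h0:ℤ)) * hu
      have hz2' : z ^ (2:ℤ) = w := by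
        rw [show (2:ℤ) = 1 + 1 by norm_num, zpow_add, zpow_one, hz2]
      refine ⟨z, ?_, ?_⟩
      · obtain ⟨q, hq⟩ := hd_K
        apply Subgroup.mem_zpowers_iff.mpr
        refine ⟨2 * q, ?_⟩
        rw [zpow_mul, hz2', hwdef, ← zpow_mul, hxK, ← hq]
      · apply Subgroup.mem_zpowers_iff.mpr
        refine ⟨1 - 2 * u, ?_⟩
        rw [show (1 - 2 * u) = 1 + 2 * (-u) by ring, zpow_add, zpow_one,
          zpow_mul, hz2', hz]
        rw [mul_assoc, ← zpow_add]
        norm_num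
end

section
/- For every n ≥ 1, the enhanced power graph of the group U_{6n} = ⟨a, b : a^{2n} = b^3 = e, ba = ab^{-1}⟩ is a perfect graph. -/
open Subgroup Pointwise in
private lemma exists_maxcyc {G : Type*} [Group G] [Fintype G] (v : G) :
    ∃ w : G, (∀ u : G, Subgroup.zpowers w ≤ Subgroup.zpowers u →
      Subgroup.zpowers w = Subgroup.zpowers u) ∧ v ∈ Subgroup.zpowers w := by
  classical
  obtain ⟨w, hw, hmax⟩ := Finset.exists_max_image
    (Finset.univ.filter fun w : G => v ∈ zpowers w) (fun w => Nat.card (zpowers w))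
    ⟨v, by simp [Subgroup.mem_zpowers]⟩
  simp only [Finset.mem_filter, Finset.mem_univ, true_and] at hw hmax
  refine ⟨w, fun u hle => ?_, hw⟩
  have hv : w ∈ zpowers u := hle (Subgroup.mem_zpowers w)
  have hcard : Nat.card (zpowers u) ≤ Nat.card (zpowers w) := hmax u (hle hw)
  have hsub : ((zpowers w : Subgroup G) : Set G) ⊆ ((zpowers u : Subgroup G) : Set G) := hle
  have hEq := Set.eq_of_subset_of_ncard_le hsub
    (by rw [← Nat.card_coe_set_eq, ← Nat.card_coe_set_eq]; exact hcard)
    (Set.toFinite _)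
  exact SetLike.coe_injective hEq

private lemma chrom_eq_cliqueNum {V : Type*} [Fintype V] (g : SimpleGraph V)
    (r : V → V → Prop) (htrans : ∀ {x y z}, r x y → r y z → r x z)
    (hirr : ∀ x, ¬ r x x)
    (hadj : ∀ x y, g.Adj x y ↔ r x y ∨ r y x)
    (htree : ∀ a b c, r a c → r b c → a = b ∨ r a b ∨ r b a) :
    g.chromaticNumber = (cliqueNum' g : ℕ∞) := by
  classical
  set K := {k | ∃ s : Finset V, g.IsNClique k s} with hK
  have hbdd : BddAbove K := by
    refine ⟨Fintype.card V, ?_⟩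
    rintro k ⟨s, hs⟩
    exact hs.2 ▸ s.card_le_univ.trans_eq (Finset.card_univ)
  have h0K : (0 : ℕ) ∈ K := ⟨∅, by simp⟩
  have hKne : K.Nonempty := ⟨0, h0K⟩
  have hNK : cliqueNum' g ∈ K := Nat.sSup_mem hKne hbdd
  have hanc : ∀ v : V, (Finset.univ.filter fun u => r u v).card + 1 ≤ cliqueNum' g := by
    intro v
    have hv : v ∉ Finset.univ.filter fun u => r u v := by simp [hirr v]
    have hcl : g.IsNClique ((Finset.univ.filter fun u => r u v).card + 1)
        (insert v (Finset.univ.filter fun u => r u v)) := by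
      constructor
      · intro x hx y hy hxy
        simp only [Finset.coe_insert, Set.mem_insert_iff, Finset.mem_coe,
          Finset.mem_filter] at hx hy
        rcases hx with rfl | hx <;> rcases hy with rfl | hy
        · exact absurd rfl hxy
        · exact ((hadj y x).mpr (Or.inl hy.2)).symm
        · exact (hadj x y).mpr (Or.inl hx.2)
        · rcases htree x y v hx.2 hy.2 with h | h | h
          · exact absurd h hxy
          · exact (hadj x y).mpr (Or.inl h)
          · exact (hadj x y).mpr (Or.inr h)
      · rw [Finset.card_insert_of_notMem hv]
    exact le_csSup hbdd ⟨_, hcl⟩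
  have hcol : g.Colorable (cliqueNum' g) := by
    refine ⟨SimpleGraph.Coloring.mk
      (fun v => ⟨(Finset.univ.filter fun u => r u v).card, Nat.lt_of_succ_le (hanc v)⟩) ?_⟩
    intro u v huv heq
    have heq' : (Finset.univ.filter fun w => r w u).card
        = (Finset.univ.filter fun w => r w v).card := congrArg Fin.val heq
    have key : ∀ p q : V, r p q →
        (Finset.univ.filter fun w => r w p) ⊂ (Finset.univ.filter fun w => r w q) := by
      intro p q hpq
      have hsub : (Finset.univ.filter fun w => r w p) ⊆ (Finset.univ.filter fun w => r w q) := by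
        intro w hw
        simp only [Finset.mem_filter, Finset.mem_univ, true_and] at hw ⊢
        exact htrans hw hpq
      refine (Finset.ssubset_iff_of_subset hsub).mpr ⟨p, ?_, ?_⟩
      · simp [hpq]
      · simp [hirr p]
    rcases (hadj u v).mp huv with h | h
    · exact absurd heq' (Finset.card_lt_card (key u v h)).ne
    · exact absurd heq'.symm (Finset.card_lt_card (key v u h)).ne
  have hle : g.chromaticNumber ≤ (cliqueNum' g : ℕ∞) := hcol.chromaticNumber_le
  have hge : (cliqueNum' g : ℕ∞) ≤ g.chromaticNumber := by
    rw [SimpleGraph.chromaticNumber]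
    refine le_iInf fun nn => le_iInf fun hn => ?_
    obtain ⟨t, ht⟩ := hNK
    obtain ⟨c⟩ := (hn : g.Colorable nn)
    have hinj : Set.InjOn (fun x => c x) ↑t := by
      intro x hx y hy hxy
      by_contra hne
      exact c.valid (ht.1 hx hy hne) hxy
    have hcard' : t.card ≤ nn := by
      have := Finset.card_le_card_of_injOn (fun x => c x)
        (fun x _ => Finset.mem_univ _) hinj
      simpa using this
    exact_mod_cast (ht.2 ▸ hcard' : cliqueNum' g ≤ nn)
  exact le_antisymm hle hge

private lemma perfect_of_forest {V : Type*} [Fintype V] (g : SimpleGraph V)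
    (r : V → V → Prop) (htrans : ∀ {x y z}, r x y → r y z → r x z)
    (hirr : ∀ x, ¬ r x x)
    (hadj : ∀ x y, g.Adj x y ↔ r x y ∨ r y x)
    (htree : ∀ a b c, r a c → r b c → a = b ∨ r a b ∨ r b a) :
    IsPerfect g := by
  intro s
  haveI : Fintype ↥s := Fintype.ofFinite _
  refine chrom_eq_cliqueNum (g.induce s) (fun u v => r u.1 v.1)
    (fun h1 h2 => htrans h1 h2) (fun x => hirr x.1) (fun u v => ?_) (fun a b c h1 h2 => ?_)
  · exact hadj u.1 v.1
  · rcases htree a.1 b.1 c.1 h1 h2 with h | h | h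
    · exact Or.inl (Subtype.ext h)
    · exact Or.inr (Or.inl h)
    · exact Or.inr (Or.inr h)

section
open Subgroup Pointwise

/-- For every `n ≥ 1`, the enhanced power graph of
`U_{6n} = ⟨a, b : a^{2n} = b³ = e, ba = ab⁻¹⟩` is a perfect graph. -/
theorem stmt_14 {G : Type*} [Group G] [Fintype G] (n : ℕ) (hn : 1 ≤ n)
    (a b : G) (ha : a ^ (2 * n) = 1) (hb : b ^ 3 = 1) (hba : b * a = a * b⁻¹)
    (hcard : Fintype.card G = 6 * n) (hgen : Subgroup.closure {a, b} = ⊤) :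
    IsPerfect (enhancedPowerGraph G) := by

  classical
  haveI : Fact (Nat.Prime 3) := ⟨by norm_num⟩
  have s2 : a * b * a⁻¹ = b⁻¹ := by
    have h1 : a * b⁻¹ * a⁻¹ = b := by rw [← hba]; group
    calc a * b * a⁻¹ = (a * b⁻¹ * a⁻¹)⁻¹ := by group
    _ = b⁻¹ := by rw [h1]
  have horda_dvd : orderOf a ∣ 2 * n := orderOf_dvd_of_pow_eq_one ha
  have hb_ne : b ≠ 1 := by
    intro h1
    have hle : (Subgroup.closure {a, b} : Subgroup G) ≤ Subgroup.zpowers a := by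
      rw [Subgroup.closure_le]
      rintro x hx
      rcases hx with h | h
      · rw [h]; exact Subgroup.mem_zpowers a
      · simp only [Set.mem_singleton_iff] at h
        rw [h, h1]
        exact one_mem _
    have hall : ∀ g : G, g ∈ Subgroup.zpowers a :=
      fun g => hle (hgen ▸ Subgroup.mem_top g)
    have h1' : orderOf a = Nat.card G := orderOf_eq_card_of_forall_mem_zpowers hall
    rw [Nat.card_eq_fintype_card] at h1'
    have h2' := Nat.le_of_dvd (by omega) horda_dvd
    omega
  have hordb : orderOf b = 3 := orderOf_eq_prime hb hb_ne
  have hconjb : ∀ k : ℤ, a * b ^ k * a⁻¹ = b ^ (-k) := by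
    intro k
    rw [← conj_zpow, s2, inv_zpow']
  have hconjb' : ∀ k : ℤ, a⁻¹ * b ^ k * a = b ^ (-k) := by
    intro k
    have := hconjb (-k)
    rw [neg_neg] at this
    rw [← this]; group
  haveI hNn : (Subgroup.zpowers b).Normal := by
    rw [← Subgroup.normalizer_eq_top_iff, eq_top_iff, ← hgen, Subgroup.closure_le]
    rintro x hx
    rcases hx with h | h
    · rw [h, SetLike.mem_coe, Subgroup.mem_normalizer_iff]
      intro g
      constructor
      · rintro ⟨k, rfl⟩
        exact ⟨-k, (hconjb k).symm⟩
      · rintro ⟨k, hk⟩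
        refine ⟨-k, ?_⟩
        show b ^ (-k) = g
        rw [← hconjb' k]
        show a⁻¹ * ((fun x => b ^ x) k) * a = g
        rw [hk]
        group
    · simp only [Set.mem_singleton_iff] at h
      rw [h]
      exact Subgroup.le_normalizer (Subgroup.mem_zpowers b)
  have hsup : Subgroup.zpowers b ⊔ Subgroup.zpowers a = ⊤ := by
    rw [eq_top_iff, ← hgen, Subgroup.closure_le]
    rintro x hx
    rcases hx with h | h
    · rw [h]; exact Subgroup.mem_sup_right (Subgroup.mem_zpowers a)
    · simp only [Set.mem_singleton_iff] at h
      rw [h]; exact Subgroup.mem_sup_left (Subgroup.mem_zpowers b)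
  have hmulset : ((⊤ : Subgroup G) : Set G)
      = (Subgroup.zpowers b : Set G) * (Subgroup.zpowers a : Set G) := by
    rw [← hsup]
    exact Subgroup.normal_mul _ _
  have hcard6 : Nat.card G = 6 * n := by rw [Nat.card_eq_fintype_card, hcard]
  have hcard_le : 6 * n ≤ orderOf b * orderOf a := by
    have h1 : Nat.card G = Nat.card ((Subgroup.zpowers b : Set G) * (Subgroup.zpowers a : Set G)) := by
      rw [← hmulset]
      simp only [Subgroup.coe_top]
      exact (Nat.card_congr (Equiv.Set.univ G)).symm
    have h2 := Set.natCard_mul_le (s := (Subgroup.zpowers b : Set G)) (t := (Subgroup.zpowers a : Set G))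
    rw [← h1] at h2
    have h3 : Nat.card (Subgroup.zpowers b : Set G) = orderOf b := by
      rw [← Nat.card_zpowers]; rfl
    have h4 : Nat.card (Subgroup.zpowers a : Set G) = orderOf a := by
      rw [← Nat.card_zpowers]; rfl
    rw [h3, h4] at h2
    omega
  have horda : orderOf a = 2 * n := by
    have h2' := Nat.le_of_dvd (by omega) horda_dvd
    rw [hordb] at hcard_le
    omega
  have hint : Subgroup.zpowers b ⊓ Subgroup.zpowers a = ⊥ := by
    have hdvd : Nat.card (Subgroup.zpowers b ⊓ Subgroup.zpowers a : Subgroup G) ∣ 3 := by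
      rw [← hordb, ← Nat.card_zpowers]
      exact Subgroup.card_dvd_of_le inf_le_left
    rcases (Nat.prime_three).eq_one_or_self_of_dvd _ hdvd with h1 | h3
    · exact Subgroup.card_eq_one.mp h1
    · exfalso
      have hcards : Nat.card (Subgroup.zpowers b) ≤
          Nat.card (Subgroup.zpowers b ⊓ Subgroup.zpowers a : Subgroup G) := by
        rw [h3, Nat.card_zpowers, hordb]
      have hEq : (Subgroup.zpowers b ⊓ Subgroup.zpowers a : Subgroup G) = Subgroup.zpowers b := by
        apply SetLike.coe_injective
        refine Set.eq_of_subset_of_ncard_le (SetLike.coe_subset_coe.mpr inf_le_left)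
          ?_ (Set.toFinite _)
        rw [← Nat.card_coe_set_eq, ← Nat.card_coe_set_eq]
        exact hcards
      have hle : Subgroup.zpowers b ≤ Subgroup.zpowers a := inf_eq_left.mp hEq
      have htop : (⊤ : Subgroup G) = Subgroup.zpowers a := by
        rw [← hsup, sup_eq_right.mpr hle]
      have : Nat.card G = orderOf a := by
        rw [← Nat.card_zpowers, ← htop]
        exact (Nat.card_congr Subgroup.topEquiv.toEquiv).symm
      omega
  have hnf : ∀ g : G, ∃ (i j : ℤ), g = b ^ i * a ^ j := by
    intro g
    have hg : g ∈ ((Subgroup.zpowers b : Set G) * (Subgroup.zpowers a : Set G)) := by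
      rw [← hmulset]; trivial
    rw [Set.mem_mul] at hg
    obtain ⟨x, hx, y, hy, hxy⟩ := hg
    obtain ⟨i, hi⟩ := Subgroup.mem_zpowers_iff.mp hx
    obtain ⟨j, hj⟩ := Subgroup.mem_zpowers_iff.mp hy
    exact ⟨i, j, by rw [hi, hj, hxy]⟩
  -- a^2 is central
  have hab : a * b = b⁻¹ * a := by rw [← s2]; group
  have hab' : a * b⁻¹ = b * a := by
    have := congrArg (fun x => x⁻¹) s2
    simp only [mul_inv_rev, inv_inv] at this
    calc a * b⁻¹ = (a * b⁻¹ * a⁻¹) * a := by group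
    _ = b * a := by rw [← hba]; group
  have ha2b : a ^ (2 : ℕ) * b = b * a ^ (2 : ℕ) := by
    calc a ^ (2:ℕ) * b = a * (a * b) := by rw [pow_two]; group
    _ = (a * b⁻¹) * a := by rw [hab]; group
    _ = b * a ^ (2:ℕ) := by rw [hab', pow_two]; group
  have hcent : ∀ g : G, Commute (a ^ (2 : ℕ)) g := by
    intro g
    have hle : Subgroup.closure {a, b} ≤ Subgroup.centralizer {a ^ (2:ℕ)} := by
      rw [Subgroup.closure_le]
      rintro x hx
      rcases hx with h | h
      · rw [h, SetLike.mem_coe, Subgroup.mem_centralizer_singleton_iff]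
        rw [pow_two]; group
      · simp only [Set.mem_singleton_iff] at h
        rw [h, SetLike.mem_coe, Subgroup.mem_centralizer_singleton_iff]
        exact ha2b.symm
    have hg := hle (hgen ▸ Subgroup.mem_top g)
    exact (Subgroup.mem_centralizer_singleton_iff.mp hg).symm
  have hcentz : ∀ (u : ℤ) (g : G), Commute (a ^ (2 * u : ℤ)) g := by
    intro u g
    have h1 : a ^ (2 * u : ℤ) = (a ^ (2:ℕ)) ^ u := by
      rw [← zpow_natCast a 2, ← zpow_mul]
      norm_num
    rw [h1]
    exact (hcent g).zpow_left u
  have hcentE : ∀ (j : ℤ), Even j → ∀ g : G, Commute (a ^ (j : ℤ)) g := by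
    intro j hj g
    obtain ⟨u, rfl⟩ := hj
    have : u + u = 2 * u := by ring
    rw [this]
    exact hcentz u g
  -- odd conjugation
  have hoddconj : ∀ (j : ℤ), Odd j → ∀ (k : ℤ), a ^ j * b ^ k * a ^ (-j) = b ^ (-k) := by
    intro j hj k
    obtain ⟨u, rfl⟩ := hj
    have h1 : a ^ (2*u+1 : ℤ) = a ^ (2*u : ℤ) * a := by
      rw [zpow_add, zpow_one]
    have h2 : a ^ (-(2*u+1) : ℤ) = a⁻¹ * a ^ (-(2*u) : ℤ) := by group
    rw [h1, h2]
    have hc := (hcentz u (b ^ k)).eq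
    calc a ^ (2*u:ℤ) * a * b ^ k * (a⁻¹ * a ^ (-(2*u):ℤ))
        = a ^ (2*u:ℤ) * (a * b ^ k * a⁻¹) * a ^ (-(2*u):ℤ) := by group
    _ = a ^ (2*u:ℤ) * b ^ (-k) * a ^ (-(2*u):ℤ) := by rw [hconjb]
    _ = b ^ (-k) * (a ^ (2*u:ℤ) * a ^ (-(2*u):ℤ)) := by
        rw [(hcentz u (b ^ (-k))).eq]; group
    _ = b ^ (-k) := by rw [← zpow_add]; simp
  have hbne2 : (b : G)⁻¹ ≠ b := by
    intro hbb
    have hb2 : b ^ (2:ℕ) = 1 := by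
      rw [pow_two]
      nth_rewrite 1 [← hbb]
      simp
    have := orderOf_dvd_of_pow_eq_one hb2
    rw [hordb] at this
    omega
  have hajA : ∀ j : ℤ, (a ^ j ∈ Subgroup.centralizer {b} ↔ Even j) := by
    intro j
    constructor
    · intro hj
      by_contra hodd
      rw [Int.not_even_iff_odd] at hodd
      have h1 := hoddconj j hodd 1
      have h2 := Subgroup.mem_centralizer_singleton_iff.mp hj
      simp only [zpow_neg, zpow_one] at h1
      apply hbne2
      calc b⁻¹ = a ^ j * b * (a ^ j)⁻¹ := h1.symm
      _ = b := by rw [h2]; group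
    · intro hj
      rw [Subgroup.mem_centralizer_singleton_iff]
      exact (hcentE j hj b).eq
  have hbiA : ∀ i : ℤ, b ^ i ∈ Subgroup.centralizer {b} := by
    intro i
    rw [Subgroup.mem_centralizer_singleton_iff]
    exact (Commute.refl b).zpow_right i |>.eq.symm
  have hmemA : ∀ i j : ℤ, (b ^ i * a ^ j ∈ Subgroup.centralizer {b} ↔ Even j) := by
    intro i j
    rw [Subgroup.mul_mem_cancel_left _ (hbiA i)]
    exact hajA j
  have hsqF : ∀ i j : ℤ, Odd j → (b ^ i * a ^ j) ^ (2:ℤ) = a ^ (2*j) := by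
    intro i j hj
    have h1 : (b ^ i * a ^ j) ^ (2:ℤ) = b ^ i * (a ^ j * b ^ i * a ^ (-j)) * a ^ (j + j) := by
      rw [show (2:ℤ) = 1 + 1 by norm_num, zpow_add, zpow_one, zpow_add]
      group
    rw [h1, hoddconj j hj i, two_mul]
    calc b ^ i * b ^ (-i) * a ^ (j+j) = b ^ (i + -i) * a ^ (j+j) := by rw [← zpow_add]
    _ = a ^ (j+j) := by simp
  have hpow_evenT : ∀ i j t : ℤ, Odd j → Even t → (b ^ i * a ^ j) ^ t = a ^ (t*j) := by
    intro i j t hj ht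
    obtain ⟨u, rfl⟩ := ht
    have h1 : (u + u : ℤ) = 2 * u := by ring
    rw [h1, zpow_mul, hsqF i j hj, ← zpow_mul]
    congr 1
    ring
  have hpow_oddT : ∀ i j t : ℤ, Odd j → Odd t → (b ^ i * a ^ j) ^ t = b ^ i * a ^ (t*j) := by
    intro i j t hj ht
    obtain ⟨u, rfl⟩ := ht
    have h1 : (b ^ i * a ^ j) ^ (2*u+1 : ℤ)
        = (b ^ i * a ^ j) ^ (2*u : ℤ) * (b ^ i * a ^ j) := by
      rw [zpow_add, zpow_one]
    rw [h1, hpow_evenT i j (2*u) hj ⟨u, by ring⟩]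
    have h2 : Even (2*u*j : ℤ) := ⟨u*j, by ring⟩
    calc a ^ (2*u*j:ℤ) * (b ^ i * a ^ j) = (a ^ (2*u*j:ℤ) * b ^ i) * a ^ j := by group
    _ = (b ^ i * a ^ (2*u*j:ℤ)) * a ^ j := by rw [(hcentE _ h2 (b ^ i)).eq]
    _ = b ^ i * a ^ ((2*u+1)*j) := by rw [mul_assoc, ← zpow_add]; congr 2; ring
  -- the 3-part data of n
  set e3 : ℕ := n.factorization 3 with he3def
  set m : ℕ := n / 3 ^ e3 with hmdef
  have hnm : 3 ^ e3 * m = n := Nat.ordProj_mul_ordCompl_eq_self n 3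
  have hm3 : ¬ ((3:ℕ) ∣ m) := Nat.not_dvd_ordCompl (by norm_num) (by omega)
  set q0 : G := a ^ ((2 * 3 ^ e3 : ℕ) : ℤ) with hq0def
  have hq0m : q0 ^ ((m:ℕ) : ℤ) = 1 := by
    rw [hq0def, ← zpow_mul]
    have hcast : ((2 * 3 ^ e3 : ℕ) : ℤ) * ((m:ℕ) : ℤ) = ((2 * n : ℕ) : ℤ) := by
      push_cast [← hnm]; ring
    rw [hcast, zpow_natCast, ha]
  have hq0cent : ∀ g : G, Commute q0 g := by
    intro g
    have h0 := hcentz ((3:ℤ)^e3) g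
    have hcast : ((2 * 3 ^ e3 : ℕ) : ℤ) = 2 * (3:ℤ)^e3 := by push_cast; ring
    rw [hq0def, hcast]
    exact h0
  have horda2 : orderOf (a ^ (2:ℕ)) = n := by
    rw [orderOf_pow, horda, Nat.gcd_eq_right ⟨n, by ring⟩]
    omega
  have hL1 : ∀ x : G, x ∈ Subgroup.centralizer {b} → ¬((3:ℕ) ∣ orderOf x) →
      x ∈ Subgroup.zpowers q0 := by
    intro x hxA hx3
    have hxC : x ∈ Subgroup.zpowers (a ^ (2:ℕ)) := by
      obtain ⟨i, j, rfl⟩ := hnf x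
      have hj : Even j := (hmemA i j).mp hxA
      have hcube : (b ^ i * a ^ j) ^ (3:ℤ) ∈ Subgroup.zpowers (a ^ (2:ℕ)) := by
        have hcomm : Commute (b ^ i) (a ^ j) := (hcentE j hj (b ^ i)).symm
        have h3 : (b ^ i * a ^ j) ^ (3:ℤ) = b ^ (i*3) * a ^ (j*3) := by
          rw [hcomm.mul_zpow, ← zpow_mul, ← zpow_mul]
        have hb3 : (b : G) ^ (i*3 : ℤ) = 1 := by
          rw [mul_comm, zpow_mul]
          have : (b : G) ^ (3:ℤ) = 1 := by
            rw [show (3:ℤ) = ((3:ℕ):ℤ) from rfl, zpow_natCast, hb]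
          rw [this, one_zpow]
        obtain ⟨u, rfl⟩ := hj
        refine ⟨3*u, ?_⟩
        beta_reduce
        rw [h3, hb3, one_mul, ← zpow_natCast a 2, ← zpow_mul]
        congr 1
        push_cast
        ring
      have hx_pow : (b ^ i * a ^ j) ∈ Subgroup.zpowers ((b ^ i * a ^ j) ^ (3:ℤ)) := by
        set x := b ^ i * a ^ j
        have hcop : Nat.Coprime 3 (orderOf x) :=
          (Nat.Prime.coprime_iff_not_dvd Nat.prime_three).mpr hx3
        have hbez := Nat.gcd_eq_gcd_ab 3 (orderOf x)
        rw [hcop] at hbez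
        have h1 : x ^ ((orderOf x : ℤ) * Nat.gcdB 3 (orderOf x)) = 1 := by
          rw [zpow_mul, zpow_natCast, pow_orderOf_eq_one, one_zpow]
        have h2 : x = x ^ ((3:ℤ) * Nat.gcdA 3 (orderOf x)) := by
          conv_lhs => rw [← zpow_one x]
          rw [show (1:ℤ) = (3:ℤ) * Nat.gcdA 3 (orderOf x)
            + (orderOf x : ℤ) * Nat.gcdB 3 (orderOf x) from by exact_mod_cast hbez]
          rw [zpow_add, h1, mul_one]
        refine ⟨Nat.gcdA 3 (orderOf x), ?_⟩
        beta_reduce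
        rw [← zpow_mul]
        exact h2.symm
      exact (Subgroup.zpowers_le.mpr hcube) hx_pow
    have hxn : orderOf x ∣ n := horda2 ▸ orderOf_dvd_of_mem_zpowers hxC
    have hcop3 : Nat.Coprime (orderOf x) (3 ^ e3) :=
      (((Nat.Prime.coprime_iff_not_dvd Nat.prime_three).mpr hx3).symm).pow_right e3
    have hxm : orderOf x ∣ m := by
      have hh := hxn
      rw [← hnm, Nat.mul_comm] at hh
      exact hcop3.dvd_of_dvd_mul_right hh
    obtain ⟨T, hT⟩ := Subgroup.mem_zpowers_iff.mp hxC
    have hxm1 : x ^ ((m:ℕ) : ℤ) = 1 := by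
      rw [zpow_natCast]
      exact orderOf_dvd_iff_pow_eq_one.mp hxm
    have hcop2 : Nat.Coprime (3 ^ e3) m :=
      Nat.Coprime.pow_left e3 ((Nat.Prime.coprime_iff_not_dvd Nat.prime_three).mpr hm3)
    have hbez2 := Nat.gcd_eq_gcd_ab (3 ^ e3) m
    rw [hcop2] at hbez2
    have h1 : x ^ ((m:ℤ) * Nat.gcdB (3^e3) m) = 1 := by
      rw [zpow_mul, hxm1, one_zpow]
    have h2 : x = (x ^ ((3^e3 : ℕ) : ℤ)) ^ (Nat.gcdA (3^e3) m) := by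
      rw [← zpow_mul]
      conv_lhs => rw [← zpow_one x]
      rw [show (1:ℤ) = ((3^e3:ℕ):ℤ) * Nat.gcdA (3^e3) m + (m:ℤ) * Nat.gcdB (3^e3) m from by
        exact_mod_cast hbez2]
      rw [zpow_add, h1, mul_one]
    have h3 : x ^ ((3^e3 : ℕ) : ℤ) = q0 ^ (T : ℤ) := by
      rw [← hT, ← zpow_natCast a 2, ← zpow_mul, ← zpow_mul, hq0def, ← zpow_mul]
      congr 1
      push_cast
      ring
    rw [h3, ← zpow_mul] at h2
    exact ⟨T * Nat.gcdA (3^e3) m, by beta_reduce; exact h2.symm⟩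
  set MaxC : G → Prop := fun w => ∀ u : G, Subgroup.zpowers w ≤ Subgroup.zpowers u →
      Subgroup.zpowers w = Subgroup.zpowers u with hMC
  have hodd_max : ∀ w : G, MaxC w → w ∉ Subgroup.centralizer {b} →
      ∃ i : ℤ, Subgroup.zpowers w = Subgroup.zpowers (b ^ i * a) ∧
        a ^ (2:ℕ) ∈ Subgroup.zpowers w := by
    intro w hw hwA
    obtain ⟨i, j, rfl⟩ := hnf w
    have hj : Odd j := by
      rw [← Int.not_even_iff_odd]
      intro hje
      exact hwA ((hmemA i j).mpr hje)
    have hin : b ^ i * a ^ j ∈ Subgroup.zpowers (b ^ i * a) := by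
      refine ⟨j, ?_⟩
      beta_reduce
      have h1 := hpow_oddT i 1 j odd_one hj
      rw [zpow_one, mul_one] at h1
      exact h1
    have heq := hw _ (Subgroup.zpowers_le.mpr hin)
    refine ⟨i, heq, ?_⟩
    rw [heq]
    refine ⟨2, ?_⟩
    beta_reduce
    have h2 := hsqF i 1 odd_one
    rw [zpow_one, mul_one] at h2
    rw [h2, show ((2:ℤ)) = ((2:ℕ):ℤ) from rfl, zpow_natCast]
  have hL2 : ∀ w : G, MaxC w → Subgroup.zpowers q0 ≤ Subgroup.zpowers w := by
    intro w hw
    by_cases hwA : w ∈ Subgroup.centralizer {b}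
    case neg =>
      obtain ⟨i, heq, ha2⟩ := hodd_max w hw hwA
      refine Subgroup.zpowers_le.mpr ?_
      rw [hq0def]
      have hsplit : a ^ ((2*3^e3:ℕ):ℤ) = (a ^ (2:ℕ)) ^ ((3^e3:ℕ):ℤ) := by
        rw [← zpow_natCast a 2, ← zpow_mul]
        norm_cast
      rw [hsplit]
      exact Subgroup.zpow_mem _ ha2 _
    case pos =>
      set d := orderOf w with hd
      have hd0 : d ≠ 0 := (orderOf_pos w).ne'
      set al := d.factorization 3 with hal
      set mu := d / 3 ^ al with hmu
      have hdal : 3 ^ al * mu = d := Nat.ordProj_mul_ordCompl_eq_self d 3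
      have hmu3 : ¬ ((3:ℕ) ∣ mu) := Nat.not_dvd_ordCompl (by norm_num) hd0
      have hcop : Nat.Coprime (3 ^ al) mu :=
        Nat.Coprime.pow_left al ((Nat.Prime.coprime_iff_not_dvd Nat.prime_three).mpr hmu3)
      have hbez := Nat.gcd_eq_gcd_ab (3 ^ al) mu
      rw [hcop] at hbez
      set X := Nat.gcdA (3^al) mu with hX
      set Y := Nat.gcdB (3^al) mu with hY
      set k3 := w ^ ((mu:ℤ) * Y) with hk3
      set km := w ^ (((3^al:ℕ):ℤ) * X) with hkm
      have hwd : w ^ ((d:ℕ):ℤ) = 1 := by rw [zpow_natCast]; exact pow_orderOf_eq_one w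
      have hk3o : k3 ^ (((3^al:ℕ)):ℤ) = 1 := by
        rw [hk3, ← zpow_mul]
        have hcast : (mu:ℤ) * Y * ((3^al:ℕ):ℤ) = ((d:ℕ):ℤ) * Y := by push_cast [← hdal]; ring
        rw [hcast, zpow_mul, hwd, one_zpow]
      have hkmo : km ^ ((mu:ℕ):ℤ) = 1 := by
        rw [hkm, ← zpow_mul]
        have hcast : ((3^al:ℕ):ℤ) * X * ((mu:ℕ):ℤ) = ((d:ℕ):ℤ) * X := by push_cast [← hdal]; ring
        rw [hcast, zpow_mul, hwd, one_zpow]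
      have hkmQ : km ∈ Subgroup.zpowers q0 := by
        apply hL1
        · exact Subgroup.zpow_mem _ hwA _
        · intro hdvd
          have h1 : orderOf km ∣ mu := by
            apply orderOf_dvd_of_pow_eq_one
            have h2 := hkmo
            rw [zpow_natCast] at h2
            exact h2
          exact hmu3 (hdvd.trans h1)
      set t := k3 * q0 with ht
      have hcomm : Commute k3 q0 := (hq0cent k3).symm
      have hcop2 : Nat.Coprime (3 ^ al) m :=
        Nat.Coprime.pow_left al ((Nat.Prime.coprime_iff_not_dvd Nat.prime_three).mpr hm3)
      have hbez2 := Nat.gcd_eq_gcd_ab (3 ^ al) m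
      rw [hcop2] at hbez2
      set X2 := Nat.gcdA (3^al) m with hX2
      set Y2 := Nat.gcdB (3^al) m with hY2
      have hone : (1:ℤ) = ((3^al:ℕ):ℤ) * X2 + (m:ℤ) * Y2 := by exact_mod_cast hbez2
      have ht_k3 : t ^ ((m:ℤ) * Y2) = k3 := by
        rw [ht, hcomm.mul_zpow]
        have hq : q0 ^ ((m:ℤ) * Y2) = 1 := by rw [zpow_mul, hq0m, one_zpow]
        have hk : k3 ^ ((m:ℤ) * Y2) = k3 := by
          have hexp : (m:ℤ) * Y2 = 1 - ((3^al:ℕ):ℤ) * X2 := by linarith [hone]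
          rw [hexp, zpow_sub, zpow_one, zpow_mul, hk3o, one_zpow, inv_one, mul_one]
        rw [hq, hk, mul_one]
      have ht_q0 : t ^ (((3^al:ℕ):ℤ) * X2) = q0 := by
        rw [ht, hcomm.mul_zpow]
        have hk : k3 ^ (((3^al:ℕ):ℤ) * X2) = 1 := by rw [zpow_mul, hk3o, one_zpow]
        have hq : q0 ^ (((3^al:ℕ):ℤ) * X2) = q0 := by
          have hexp : ((3^al:ℕ):ℤ) * X2 = 1 - (m:ℤ) * Y2 := by linarith [hone]
          rw [hexp, zpow_sub, zpow_one, zpow_mul, hq0m, one_zpow, inv_one, mul_one]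
        rw [hk, hq, one_mul]
      have hw_in_t : w ∈ Subgroup.zpowers t := by
        have hw_eq : w = km * k3 := by
          rw [hkm, hk3, ← zpow_add]
          have hcast : ((3^al:ℕ):ℤ) * X + (mu:ℤ) * Y = 1 := by exact_mod_cast hbez.symm
          rw [hcast, zpow_one]
        rw [hw_eq]
        have h1 : k3 ∈ Subgroup.zpowers t := ⟨(m:ℤ) * Y2, ht_k3⟩
        have h2 : km ∈ Subgroup.zpowers t := by
          have hq0t : Subgroup.zpowers q0 ≤ Subgroup.zpowers t :=
            Subgroup.zpowers_le.mpr ⟨((3^al:ℕ):ℤ) * X2, ht_q0⟩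
          exact hq0t hkmQ
        exact Subgroup.mul_mem _ h2 h1
      have heq := hw t (Subgroup.zpowers_le.mpr hw_in_t)
      rw [heq]
      exact Subgroup.zpowers_le.mpr ⟨((3^al:ℕ):ℤ) * X2, ht_q0⟩
  have hECL : ∀ z : G, z ∈ Subgroup.centralizer {b} → ∀ x y : G,
      x ∈ Subgroup.zpowers z → y ∈ Subgroup.zpowers z →
      (∀ w : G, MaxC w → x ∈ Subgroup.zpowers w → y ∈ Subgroup.zpowers w) ∨
      (∀ w : G, MaxC w → y ∈ Subgroup.zpowers w → x ∈ Subgroup.zpowers w) := by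
    intro z hzA x y hx hy
    set d := orderOf z with hd
    have hd0 : (0:ℕ) < d := orderOf_pos z
    set al := d.factorization 3 with hal
    have hnatexp : ∀ v : G, v ∈ Subgroup.zpowers z → ∃ p : ℕ, p < d ∧ z ^ p = v := by
      intro v hv
      obtain ⟨k, hk⟩ := Subgroup.mem_zpowers_iff.mp hv
      have h1 : k % (d:ℤ) < d := Int.emod_lt_of_pos k (by exact_mod_cast hd0)
      have h2 : (0:ℤ) ≤ k % (d:ℤ) := Int.emod_nonneg k (by exact_mod_cast hd0.ne')
      refine ⟨(k % (d:ℤ)).toNat, by omega, ?_⟩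
      rw [← zpow_natCast, Int.toNat_of_nonneg h2, hd]
      rw [zpow_mod_orderOf]
      exact hk
    have main : ∀ x' y' : G, ∀ p s : ℕ, p ≠ 0 → z ^ p = x' → z ^ s = y' →
        min (p.factorization 3) al ≤ min (s.factorization 3) al →
        ∀ w : G, MaxC w → x' ∈ Subgroup.zpowers w → y' ∈ Subgroup.zpowers w := by
      intro x' y' p s hp0 hpx hsy hmin w hw hxw
      have hz3A : z ^ (3^al : ℕ) ∈ Subgroup.centralizer {b} := Subgroup.pow_mem _ hzA _
      have hdvd3 : (3:ℕ)^al ∣ d := Nat.ordProj_dvd d 3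
      have hz3ord : ¬ ((3:ℕ) ∣ orderOf (z ^ (3^al : ℕ))) := by
        rw [orderOf_pow, ← hd, Nat.gcd_eq_right hdvd3]
        exact Nat.not_dvd_ordCompl (by norm_num) (by omega)
      have hz3Q : z ^ (3^al : ℕ) ∈ Subgroup.zpowers q0 := hL1 _ hz3A hz3ord
      have hz3w : z ^ (3^al : ℕ) ∈ Subgroup.zpowers w := hL2 w hw hz3Q
      set g' := Nat.gcd p (3^al) with hg'
      have hg'dvd3 : g' ∣ 3 ^ al := Nat.gcd_dvd_right p (3^al)
      obtain ⟨ga, hgale, hgaeq⟩ := (Nat.dvd_prime_pow Nat.prime_three).mp hg'dvd3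
      have hgap : (3:ℕ)^ga ∣ p := hgaeq ▸ Nat.gcd_dvd_left p (3^al)
      have hga_le : ga ≤ p.factorization 3 :=
        (Nat.Prime.pow_dvd_iff_le_factorization Nat.prime_three hp0).mp hgap
      have hg'_dvd_s : g' ∣ s := by
        have h1 : ga ≤ s.factorization 3 ∨ s = 0 := by
          rcases Nat.eq_zero_or_pos s with rfl | hs0
          · exact Or.inr rfl
          · left; omega
        rcases h1 with h1 | rfl
        · calc g' = 3^ga := hgaeq
          _ ∣ 3^(s.factorization 3) := pow_dvd_pow 3 h1
          _ ∣ s := Nat.ordProj_dvd s 3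
        · exact dvd_zero g'
      obtain ⟨c, hc⟩ := hg'_dvd_s
      have hbez := Nat.gcd_eq_gcd_ab p (3^al)
      have hyy : y' = x' ^ ((Nat.gcdA p (3^al)) * c) * (z ^ (3^al:ℕ)) ^ ((Nat.gcdB p (3^al)) * c) := by
        rw [← hpx, ← zpow_natCast z p, ← zpow_mul, ← zpow_natCast z (3^al), ← zpow_mul,
          ← zpow_add, ← hsy, ← zpow_natCast z s]
        congr 1
        have hsc : ((s:ℕ):ℤ) = ((g':ℕ):ℤ) * c := by exact_mod_cast hc
        have hbezz : ((g':ℕ):ℤ)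
            = (p:ℤ) * Nat.gcdA p (3^al) + ((3^al:ℕ):ℤ) * Nat.gcdB p (3^al) := by
          exact_mod_cast hbez
        rw [hsc, hbezz]
        ring
      rw [hyy]
      exact Subgroup.mul_mem _ (Subgroup.zpow_mem _ hxw _) (Subgroup.zpow_mem _ hz3w _)
    rcases eq_or_ne x 1 with rfl | hx1
    · right; intro w _ _; exact one_mem _
    rcases eq_or_ne y 1 with rfl | hy1
    · left; intro w _ _; exact one_mem _
    obtain ⟨p, hpd, hpx⟩ := hnatexp x hx
    obtain ⟨s, hsd, hsy⟩ := hnatexp y hy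
    have hp0 : p ≠ 0 := by rintro rfl; rw [pow_zero] at hpx; exact hx1 hpx.symm
    have hs0 : s ≠ 0 := by rintro rfl; rw [pow_zero] at hsy; exact hy1 hsy.symm
    rcases le_total (min (p.factorization 3) al) (min (s.factorization 3) al) with hle | hle
    · exact Or.inl (main x y p s hp0 hpx hsy hle)
    · exact Or.inr (main y x s p hs0 hsy hpx hle)
  have hsq1 : ∀ i : ℤ, a ^ (2:ℕ) ∈ Subgroup.zpowers (b ^ i * a) := by
    intro i
    refine ⟨2, ?_⟩
    beta_reduce
    have h2 := hsqF i 1 odd_one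
    rw [zpow_one, mul_one] at h2
    rw [h2, show ((2:ℤ)) = ((2:ℕ):ℤ) from rfl, zpow_natCast]
  have ha2A : a ^ (2:ℕ) ∈ Subgroup.centralizer {b} :=
    Subgroup.mem_centralizer_singleton_iff.mpr ha2b
  have hKEY : ∀ x y z : G, x ∈ Subgroup.zpowers z → y ∈ Subgroup.zpowers z →
      (∀ w : G, MaxC w → x ∈ Subgroup.zpowers w → y ∈ Subgroup.zpowers w) ∨
      (∀ w : G, MaxC w → y ∈ Subgroup.zpowers w → x ∈ Subgroup.zpowers w) := by
    intro x y z hx hy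
    by_cases hzA : z ∈ Subgroup.centralizer {b}
    · exact hECL z hzA x y hx hy
    · obtain ⟨iz, jz, hz_eq⟩ := hnf z
      have hjz : Odd jz := by
        rw [← Int.not_even_iff_odd]
        intro hje
        exact hzA (hz_eq ▸ (hmemA iz jz).mpr hje)
      obtain ⟨tx, htx⟩ := Subgroup.mem_zpowers_iff.mp hx
      obtain ⟨ty, hty⟩ := Subgroup.mem_zpowers_iff.mp hy
      beta_reduce at htx hty
      have hpowE : ∀ t : ℤ, Even t → z ^ t ∈ Subgroup.zpowers (a ^ (2:ℕ)) := by
        intro t ht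
        obtain ⟨u, rfl⟩ := ht
        have h1 : (u+u : ℤ) = 2*u := by ring
        rw [hz_eq, h1, hpow_evenT iz jz (2*u) hjz ⟨u, by ring⟩]
        refine ⟨u * jz, ?_⟩
        beta_reduce
        rw [← zpow_natCast a 2, ← zpow_mul]
        congr 1
        push_cast
        ring
      have hpowO : ∀ t : ℤ, Odd t → z ^ t = b ^ iz * a ^ (t * jz) ∧ Odd (t * jz) := by
        intro t ht
        exact ⟨by rw [hz_eq, hpow_oddT iz jz t hjz ht], ht.mul hjz⟩
      have hodd_case : ∀ (t' : ℤ), Odd t' → ∀ v : G, z ^ t' = v →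
          ∀ w : G, MaxC w → v ∈ Subgroup.zpowers w →
            Subgroup.zpowers w = Subgroup.zpowers (b ^ iz * a) := by
        intro t' ht' v hv w hw hvw
        obtain ⟨hveq, hvodd⟩ := hpowO t' ht'
        rw [hv] at hveq
        have hvA : v ∉ Subgroup.centralizer {b} := by
          rw [hveq]
          intro hmem
          rw [hmemA] at hmem
          exact (Int.not_even_iff_odd.mpr hvodd) hmem
        have hwA : w ∉ Subgroup.centralizer {b} := by
          intro hwA'
          exact hvA ((Subgroup.zpowers_le.mpr hwA') hvw)
        obtain ⟨iw, heqw, ha2w⟩ := hodd_max w hw hwA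
        have hv_in : v ∈ Subgroup.zpowers (b ^ iw * a) := heqw ▸ hvw
        obtain ⟨t2, ht2⟩ := Subgroup.mem_zpowers_iff.mp hv_in
        beta_reduce at ht2
        have ht2odd : Odd t2 := by
          rw [← Int.not_even_iff_odd]
          intro ht2e
          apply hvA
          obtain ⟨u2, hu2⟩ := ht2e
          have h1 : (u2+u2:ℤ) = 2*u2 := by ring
          rw [← ht2, hu2, h1, show ((b:G) ^ iw * a) = b ^ iw * a ^ (1:ℤ) by rw [zpow_one],
            hpow_evenT iw 1 (2*u2) odd_one ⟨u2, by ring⟩]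
          have hev : Even (2*u2*1 : ℤ) := ⟨u2, by ring⟩
          have := (hajA (2*u2*1)).mpr hev
          exact this
        have hveq2 : v = b ^ iw * a ^ t2 := by
          rw [← ht2]
          have h1 := hpow_oddT iw 1 t2 odd_one ht2odd
          rw [zpow_one, mul_one] at h1
          exact h1
        have h0 : b ^ iz * a ^ (t'*jz) = b ^ iw * a ^ t2 := by rw [← hveq, hveq2]
        have h2 : b ^ (iz - iw) = a ^ (t2 - t'*jz) := by
          calc b ^ (iz-iw) = b ^ (-iw) * (b ^ iz * a ^ (t'*jz)) * a ^ (-(t'*jz)) := by group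
          _ = b ^ (-iw) * (b ^ iw * a ^ t2) * a ^ (-(t'*jz)) := by rw [h0]
          _ = a ^ (t2 - t'*jz) := by group
        have h3 : b ^ (iz - iw) = 1 := by
          have hmem : b ^ (iz-iw) ∈ (Subgroup.zpowers b ⊓ Subgroup.zpowers a) :=
            ⟨⟨iz - iw, rfl⟩, ⟨t2 - t'*jz, h2.symm⟩⟩
          rw [hint] at hmem
          exact hmem
        have hcancel : b ^ iw = b ^ iz := by
          have h4 : b ^ iz = b ^ (iz - iw) * b ^ iw := by
            rw [← zpow_add]
            congr 1
            ring
          rw [h4, h3, one_mul]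
        rw [heqw, hcancel]
      rcases Int.even_or_odd tx with htxe | htxo <;> rcases Int.even_or_odd ty with htye | htyo
      · have hxa := hpowE tx htxe
        rw [htx] at hxa
        have hya := hpowE ty htye
        rw [hty] at hya
        exact hECL (a^(2:ℕ)) ha2A x y hxa hya
      · right
        intro w hw hyw
        have heqw := hodd_case ty htyo y hty w hw hyw
        have hxa := hpowE tx htxe
        rw [htx] at hxa
        rw [heqw]
        exact (Subgroup.zpowers_le.mpr (hsq1 iz)) hxa
      · left
        intro w hw hxw
        have heqw := hodd_case tx htxo x htx w hw hxw
        have hya := hpowE ty htye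
        rw [hty] at hya
        rw [heqw]
        exact (Subgroup.zpowers_le.mpr (hsq1 iz)) hya
      · left
        intro w hw hxw
        have heqw := hodd_case tx htxo x htx w hw hxw
        rw [heqw, ← hty, (hpowO ty htyo).1]
        refine ⟨ty*jz, ?_⟩
        beta_reduce
        have h1 := hpow_oddT iz 1 (ty*jz) odd_one (hpowO ty htyo).2
        rw [zpow_one, mul_one] at h1
        exact h1
  -- ==== glue: the forest order and perfection ====
  set S : G → Set G := fun v => {w | MaxC w ∧ v ∈ Subgroup.zpowers w} with hSdef
  have hSne : ∀ v : G, ∃ w, w ∈ S v := by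
    intro v
    obtain ⟨w, hmax, hv⟩ := exists_maxcyc v
    exact ⟨w, hmax, hv⟩
  have hKEY' : ∀ x y z : G, x ∈ Subgroup.zpowers z → y ∈ Subgroup.zpowers z →
      S x ⊆ S y ∨ S y ⊆ S x := by
    intro x y z hx hy
    rcases hKEY x y z hx hy with h | h
    · left; rintro w ⟨hmax, hxw⟩; exact ⟨hmax, h w hmax hxw⟩
    · right; rintro w ⟨hmax, hyw⟩; exact ⟨hmax, h w hmax hyw⟩
  set eF := Fintype.equivFin G with heF
  set r : G → G → Prop := fun x y => S y ⊂ S x ∨ (S x = S y ∧ eF x < eF y) with hrdef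
  have hrtrans : ∀ {x y z : G}, r x y → r y z → r x z := by
    rintro x y z (h1 | ⟨h1, h1'⟩) (h2 | ⟨h2, h2'⟩)
    · exact Or.inl (h2.trans h1)
    · exact Or.inl (h2 ▸ h1)
    · exact Or.inl (h1.symm ▸ h2)
    · exact Or.inr ⟨h1.trans h2, h1'.trans h2'⟩
  have hrirr : ∀ x : G, ¬ r x x := by
    rintro x (h | ⟨_, h⟩)
    · exact (ssubset_irrefl _) h
    · exact lt_irrefl _ h
  have hradj : ∀ x y : G, (enhancedPowerGraph G).Adj x y ↔ r x y ∨ r y x := by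
    intro x y
    constructor
    · rintro ⟨hne, zc, hxz, hyz⟩
      have hne' : eF x ≠ eF y := fun h => hne (eF.injective h)
      by_cases heq : S x = S y
      · rcases lt_or_gt_of_ne hne' with hlt | hgt
        · exact Or.inl (Or.inr ⟨heq, hlt⟩)
        · exact Or.inr (Or.inr ⟨heq.symm, hgt⟩)
      · rcases hKEY' x y zc hxz hyz with h | h
        · exact Or.inr (Or.inl (h.ssubset_of_ne heq))
        · exact Or.inl (Or.inl (h.ssubset_of_ne (fun hh => heq hh.symm)))
    · intro h
      have key : ∀ u v : G, r u v → (enhancedPowerGraph G).Adj u v := by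
        intro u v huv
        obtain ⟨w, hwmax, hvw⟩ := hSne v
        rcases huv with hss | ⟨heq, hlt⟩
        · have hwu : w ∈ S u := hss.subset ⟨hwmax, hvw⟩
          refine ⟨fun hh => ?_, w, hwu.2, hvw⟩
          rw [hh] at hss
          exact (ssubset_irrefl _) hss
        · have hwu : w ∈ S u := heq.symm ▸ (⟨hwmax, hvw⟩ : w ∈ S v)
          refine ⟨fun hh => ?_, w, hwu.2, hvw⟩
          rw [hh] at hlt
          exact lt_irrefl _ hlt
      rcases h with h | h
      · exact key x y h
      · exact (key y x h).symm
  have hrtree : ∀ p q c : G, r p c → r q c → p = q ∨ r p q ∨ r q p := by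
    intro p q c h1 h2
    have hcp : S c ⊆ S p := by
      rcases h1 with h | ⟨h, _⟩
      · exact h.subset
      · exact h.symm.subset
    have hcq : S c ⊆ S q := by
      rcases h2 with h | ⟨h, _⟩
      · exact h.subset
      · exact h.symm.subset
    obtain ⟨w, hwmax, hcw⟩ := hSne c
    have hpw : p ∈ Subgroup.zpowers w := (hcp ⟨hwmax, hcw⟩).2
    have hqw : q ∈ Subgroup.zpowers w := (hcq ⟨hwmax, hcw⟩).2
    rcases eq_or_ne p q with rfl | hne
    · exact Or.inl rfl
    have hne' : eF p ≠ eF q := fun h => hne (eF.injective h)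
    by_cases heq : S p = S q
    · rcases lt_or_gt_of_ne hne' with hlt | hgt
      · exact Or.inr (Or.inl (Or.inr ⟨heq, hlt⟩))
      · exact Or.inr (Or.inr (Or.inr ⟨heq.symm, hgt⟩))
    · rcases hKEY' p q w hpw hqw with h | h
      · exact Or.inr (Or.inr (Or.inl (h.ssubset_of_ne heq)))
      · exact Or.inr (Or.inl (Or.inl (h.ssubset_of_ne (fun hh => heq hh.symm))))
  exact perfect_of_forest (enhancedPowerGraph G) r hrtrans hrirr hradj hrtree


end
end

section
/- For every n ≥ 3, the enhanced power graph of the dihedral group D_{2n} = ⟨a, b : a^n = b^2 = e, ab = ba^{-1}⟩ of order 2n is a perfect graph. -/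
lemma key_eq {V : Type*} [Fintype V] (g : SimpleGraph V) (K : Finset V)
    (hK : g.IsNClique K.card K) (hc : g.Colorable K.card) :
    g.chromaticNumber = (cliqueNum' g : ℕ∞) := by
  have hg : cliqueNum' g = g.cliqueNum := rfl
  rw [hg]
  refine le_antisymm (hc.chromaticNumber_le.trans ?_) ?_
  · exact_mod_cast (SimpleGraph.IsClique.card_le_cliqueNum (tc := hK.isClique))
  · obtain ⟨t, ht⟩ := g.exists_isNClique_cliqueNum
    rw [← ht.card_eq]
    exact ht.isClique.card_le_chromaticNumber

lemma invol_zpowers {G : Type*} [Group G] {z : G} (hz : z * z = 1) {x : G}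
    (hx : x ∈ Subgroup.zpowers z) : x = 1 ∨ x = z := by
  obtain ⟨m, rfl⟩ := hx
  show z ^ m = 1 ∨ z ^ m = z
  have h2 : ∀ d : ℤ, z ^ (2 * d) = 1 := fun d => by
    rw [zpow_mul]; norm_num [zpow_two, pow_two, hz]
  have key : z ^ m = z ^ (m % 2) := by
    conv_lhs => rw [← Int.emod_add_mul_ediv m 2]
    rw [zpow_add, h2, mul_one]
  rcases Int.emod_two_eq m with h | h <;> rw [key, h] <;> simp

lemma rot_of_mem {n : ℕ} {k : ZMod n} {x : DihedralGroup n}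
    (hx : x ∈ Subgroup.zpowers (DihedralGroup.r k)) : ∃ t, x = DihedralGroup.r t := by
  obtain ⟨m, rfl⟩ := hx
  show ∃ t, DihedralGroup.r k ^ m = DihedralGroup.r t
  induction m using Int.induction_on with
  | zero => exact ⟨0, by simp⟩
  | succ m ih =>
    obtain ⟨t, ht⟩ := ih
    exact ⟨t + k, by rw [zpow_add_one, ht, DihedralGroup.r_mul_r]⟩
  | pred m ih =>
    obtain ⟨t, ht⟩ := ih
    refine ⟨t + (-k), ?_⟩
    rw [zpow_sub_one, ht, show (DihedralGroup.r k)⁻¹ = DihedralGroup.r (-k) from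
      inv_eq_of_mul_eq_one_right (by rw [DihedralGroup.r_mul_r, add_neg_cancel, DihedralGroup.one_def]),
      DihedralGroup.r_mul_r]

lemma epg_adj_char {n : ℕ} {x y : DihedralGroup n}
    (h : (enhancedPowerGraph (DihedralGroup n)).Adj x y) :
    (∃ i j, x = DihedralGroup.r i ∧ y = DihedralGroup.r j) ∨ x = 1 ∨ y = 1 := by
  obtain ⟨hxy, z, hx, hy⟩ := h
  cases z with
  | r k =>
    obtain ⟨i, hi⟩ := rot_of_mem hx
    obtain ⟨j, hj⟩ := rot_of_mem hy
    exact Or.inl ⟨i, j, hi, hj⟩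
  | sr k =>
    rcases invol_zpowers (DihedralGroup.sr_mul_self k) hx with h1 | h1
    · exact Or.inr (Or.inl h1)
    · rcases invol_zpowers (DihedralGroup.sr_mul_self k) hy with h2 | h2
      · exact Or.inr (Or.inr h2)
      · exact absurd (h1.trans h2.symm) hxy

lemma epg_adj_r_r {n : ℕ} [NeZero n] {i j : ZMod n} (h : i ≠ j) :
    (enhancedPowerGraph (DihedralGroup n)).Adj (DihedralGroup.r i) (DihedralGroup.r j) := by
  have mem : ∀ t : ZMod n, DihedralGroup.r t ∈ Subgroup.zpowers (DihedralGroup.r 1) := fun t =>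
    ⟨(t.val : ℤ), by
      show DihedralGroup.r 1 ^ (t.val : ℤ) = _
      rw [zpow_natCast, DihedralGroup.r_one_pow, ZMod.natCast_val, ZMod.cast_id]⟩
  exact ⟨by simpa using h, DihedralGroup.r 1, mem i, mem j⟩

lemma epg_adj_one {n : ℕ} {x : DihedralGroup n} (h : x ≠ 1) :
    (enhancedPowerGraph (DihedralGroup n)).Adj 1 x :=
  ⟨h.symm, x, Subgroup.one_mem _, Subgroup.mem_zpowers x⟩


/-- For every `n ≥ 3`, the enhanced power graph of the dihedral group
`D_{2n}` of order `2n` is a perfect graph. -/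
theorem stmt_16 (n : ℕ) (hn : 3 ≤ n) :
    IsPerfect (enhancedPowerGraph (DihedralGroup n)) := by
  haveI : NeZero n := ⟨by omega⟩
  intro s
  classical
  haveI : Fintype ↥s := Fintype.ofFinite _
  set g := (enhancedPowerGraph (DihedralGroup n)).induce s with hgdef
  have hadj : ∀ {x y : ↥s}, g.Adj x y → (enhancedPowerGraph (DihedralGroup n)).Adj x.val y.val :=
    fun h => h
  set P : DihedralGroup n → Prop := fun x => ∃ i, x = DihedralGroup.r i with hPdef
  have hP1 : P 1 := ⟨0, DihedralGroup.one_def⟩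
  set K : Finset ↥s := Finset.univ.filter (fun x => P x.val) with hKdef
  have hmemK : ∀ x : ↥s, P x.val → x ∈ K := fun x hx =>
    Finset.mem_filter.mpr ⟨Finset.mem_univ _, hx⟩
  have hKP : ∀ x : ↥s, x ∈ K → P x.val := fun x hx => (Finset.mem_filter.mp hx).2
  by_cases h2 : 2 ≤ K.card
  · -- at least two rotations: K is a maximum clique
    have hclique : g.IsNClique K.card K := by
      refine ⟨?_, rfl⟩
      intro x hx y hy hxy
      obtain ⟨i, hi⟩ := hKP x hx
      obtain ⟨j, hj⟩ := hKP y hy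
      show (enhancedPowerGraph (DihedralGroup n)).Adj x.val y.val
      rw [hi, hj]
      refine epg_adj_r_r fun hij => hxy (Subtype.ext (by rw [hi, hj, hij]))
    -- pick an element of K whose value is not 1
    obtain ⟨a, ha, b, hb, hab⟩ := Finset.one_lt_card.mp h2
    have hvab : a.val ≠ b.val := fun h => hab (Subtype.ext h)
    obtain ⟨ρ, hρK, hρ1⟩ : ∃ ρ ∈ K, ρ.val ≠ (1 : DihedralGroup n) := by
      by_cases h1 : a.val = 1
      · exact ⟨b, hb, fun hb1 => hvab (h1.trans hb1.symm)⟩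
      · exact ⟨a, ha, h1⟩
    have hcol : g.Colorable K.card := by
      have c : g.Coloring ↥K := SimpleGraph.Coloring.mk
        (fun x => if h : P x.val then ⟨x, hmemK x h⟩ else ⟨ρ, hρK⟩)
        (by
          intro v w hvw
          show (if h : P v.val then (⟨v, hmemK v h⟩ : ↥K) else ⟨ρ, hρK⟩) ≠
            (if h : P w.val then (⟨w, hmemK w h⟩ : ↥K) else ⟨ρ, hρK⟩)
          rcases epg_adj_char (hadj hvw) with ⟨i, j, hi, hj⟩ | hv1 | hw1
          · rw [dif_pos ⟨i, hi⟩, dif_pos ⟨j, hj⟩]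
            simp only [ne_eq, Subtype.mk.injEq]
            exact hvw.ne
          · have hPv : P v.val := by rw [hv1]; exact hP1
            rw [dif_pos hPv]
            by_cases hPw : P w.val
            · rw [dif_pos hPw]
              simp only [ne_eq, Subtype.mk.injEq]
              exact hvw.ne
            · rw [dif_neg hPw]
              simp only [ne_eq, Subtype.mk.injEq]
              intro h
              exact hρ1 (h ▸ hv1)
          · have hPw : P w.val := by rw [hw1]; exact hP1
            rw [dif_pos hPw]
            by_cases hPv : P v.val
            · rw [dif_pos hPv]
              simp only [ne_eq, Subtype.mk.injEq]
              exact hvw.ne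
            · rw [dif_neg hPv]
              simp only [ne_eq, Subtype.mk.injEq]
              intro h
              exact hρ1 (h ▸ hw1))
      simpa [Fintype.card_coe] using c.colorable
    exact key_eq g K hclique hcol
  · -- at most one rotation in s
    have hrot : ∀ x y : ↥s, P x.val → P y.val → x = y := by
      intro x y hx hy
      by_contra hxy
      exact h2 (Finset.one_lt_card.mpr ⟨x, hmemK x hx, y, hmemK y hy, hxy⟩)
    have honly : ∀ {x y : ↥s}, g.Adj x y → (x.val = 1 ∧ y.val ≠ 1) ∨ (y.val = 1 ∧ x.val ≠ 1) := by
      intro x y hxy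
      have hne : x.val ≠ y.val := fun h => hxy.ne (Subtype.ext h)
      rcases epg_adj_char (hadj hxy) with ⟨i, j, hi, hj⟩ | hv1 | hw1
      · exact absurd (hrot x y ⟨i, hi⟩ ⟨j, hj⟩) hxy.ne
      · exact Or.inl ⟨hv1, fun h => hne (hv1.trans h.symm)⟩
      · exact Or.inr ⟨hw1, fun h => hne (h.trans hw1.symm)⟩
    by_cases hE : ∃ x y : ↥s, g.Adj x y
    · obtain ⟨x, y, hxy⟩ := hE
      have hcol2 : g.Colorable 2 := by
        have c : g.Coloring (Fin 2) := SimpleGraph.Coloring.mk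
          (fun a => if a.val = 1 then 0 else 1)
          (by
            intro v w hvw
            show (if v.val = 1 then (0 : Fin 2) else 1) ≠ (if w.val = 1 then 0 else 1)
            rcases honly hvw with ⟨h1, h2'⟩ | ⟨h1, h2'⟩
            · simp [h1, h2']
            · simp [h1, h2'])
        simpa using c.colorable
      have hK2 : g.IsNClique ({x, y} : Finset ↥s).card ({x, y} : Finset ↥s) := by
        rw [Finset.card_pair hxy.ne]
        refine ⟨?_, by rw [Finset.card_pair hxy.ne]⟩
        intro u hu v hv huv
        simp only [Finset.coe_insert, Finset.coe_singleton, Set.mem_insert_iff,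
          Set.mem_singleton_iff] at hu hv
        rcases hu with rfl | rfl <;> rcases hv with rfl | rfl
        · exact absurd rfl huv
        · exact hxy
        · exact hxy.symm
        · exact absurd rfl huv
      rw [Finset.card_pair hxy.ne] at hK2
      exact key_eq g ({x, y} : Finset ↥s)
        (by rwa [Finset.card_pair hxy.ne]) (by rwa [Finset.card_pair hxy.ne])
    · push_neg at hE
      by_cases hv : Nonempty ↥s
      · obtain ⟨v⟩ := hv
        have hK1 : g.IsNClique ({v} : Finset ↥s).card ({v} : Finset ↥s) := by
          refine ⟨?_, rfl⟩
          simp [SimpleGraph.IsClique, Set.pairwise_singleton]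
        have hcol1 : g.Colorable ({v} : Finset ↥s).card := by
          rw [Finset.card_singleton]
          have c : g.Coloring (Fin 1) := SimpleGraph.Coloring.mk (fun _ => 0)
            (fun {a b} h => absurd h (hE a b))
          simpa using c.colorable
        exact key_eq g _ hK1 hcol1
      · haveI : IsEmpty ↥s := not_nonempty_iff.mp hv
        have hK0 : g.IsNClique (∅ : Finset ↥s).card (∅ : Finset ↥s) := by
          simp only [Finset.card_empty]; exact SimpleGraph.isNClique_empty.mpr rfl
        have hcol0 : g.Colorable (∅ : Finset ↥s).card := by
          rw [Finset.card_empty]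
          have c : g.Coloring (Fin 0) := SimpleGraph.Coloring.mk
            (fun a => isEmptyElim a) (fun {a b} _ => isEmptyElim a)
          simpa using c.colorable
        exact key_eq g _ hK0 hcol0
end

section
/- For the enhanced power graph of the dihedral group D_{2n} = ⟨a, b : a^n = b^2 = e, ab = ba^{-1}⟩ of order 2n (n ≥ 3): (i) the minimum degree is 1; (ii) the independence number is n + 1; (iii) the matching number is ⌈n/2⌉; (iv) the strong metric dimension is 2(n − 1). -/
open DihedralGroup

set_option linter.unusedSectionVars false
namespace Stmt17

lemma mem_zpowers_r {n : ℕ} {k : ZMod n} {x : DihedralGroup n}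
    (hx : x ∈ Subgroup.zpowers (r k)) : ∃ i, x = r i := by
  obtain ⟨m, rfl⟩ := hx
  induction m using Int.induction_on with
  | zero => exact ⟨0, rfl⟩
  | succ i ih =>
    obtain ⟨j, hj⟩ := ih
    have hj' : r k ^ (i : ℤ) = r j := hj
    exact ⟨j + k, by show r k ^ ((i : ℤ) + 1) = _; rw [zpow_add, hj', zpow_one, r_mul_r]⟩
  | pred i ih =>
    obtain ⟨j, hj⟩ := ih
    have hj' : r k ^ (-(i : ℤ)) = r j := hj
    exact ⟨j + -k, by show r k ^ (-(i : ℤ) - 1) = _; rw [zpow_sub, hj', zpow_one]; rfl⟩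

lemma mem_zpowers_sr {n : ℕ} {k : ZMod n} {x : DihedralGroup n}
    (hx : x ∈ Subgroup.zpowers (sr k)) : x = 1 ∨ x = sr k := by
  obtain ⟨m, rfl⟩ := hx
  show sr k ^ m = 1 ∨ sr k ^ m = sr k
  rw [← zpow_mod_orderOf, orderOf_sr]
  push_cast
  rcases Int.emod_two_eq m with h | h <;> rw [h]
  · exact Or.inl (zpow_zero _)
  · exact Or.inr (zpow_one _)

lemma r_mem_zpowers_r_one {n : ℕ} [NeZero n] (i : ZMod n) :
    r i ∈ Subgroup.zpowers (r 1 : DihedralGroup n) := by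
  refine ⟨(i.val : ℤ), ?_⟩
  show (r 1 : DihedralGroup n) ^ ((i.val : ℕ) : ℤ) = r i
  rw [zpow_natCast, r_one_pow, ZMod.natCast_zmod_val]

lemma adj_iff {n : ℕ} [NeZero n] {x y : DihedralGroup n} :
    (enhancedPowerGraph (DihedralGroup n)).Adj x y ↔
      x ≠ y ∧ ((∃ i, x = r i) ∧ (∃ j, y = r j) ∨ x = 1 ∨ y = 1) := by
  constructor
  · rintro ⟨hne, z, hx, hy⟩
    refine ⟨hne, ?_⟩
    cases z with
    | r k => exact Or.inl ⟨mem_zpowers_r hx, mem_zpowers_r hy⟩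
    | sr k =>
      rcases mem_zpowers_sr hx with rfl | rfl
      · exact Or.inr (Or.inl rfl)
      · rcases mem_zpowers_sr hy with rfl | rfl
        · exact Or.inr (Or.inr rfl)
        · exact absurd rfl hne
  · rintro ⟨hne, ⟨⟨i, rfl⟩, ⟨j, rfl⟩⟩ | rfl | rfl⟩
    · exact ⟨hne, r 1, r_mem_zpowers_r_one i, r_mem_zpowers_r_one j⟩
    · exact ⟨hne, y, Subgroup.one_mem _, Subgroup.mem_zpowers y⟩
    · exact ⟨hne, x, Subgroup.mem_zpowers x, Subgroup.one_mem _⟩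


section
variable {n : ℕ} [NeZero n]

local notation "G" => DihedralGroup n
local notation "Γ" => enhancedPowerGraph (DihedralGroup n)

lemma sr_ne_one (i : ZMod n) : (sr i : G) ≠ 1 := by
  rw [one_def]; intro h; cases h

lemma adj_one {x : G} (hx : x ≠ 1) : (Γ).Adj 1 x :=
  adj_iff.mpr ⟨Ne.symm hx, Or.inr (Or.inl rfl)⟩

lemma adj_r_r {i j : ZMod n} (h : i ≠ j) : (Γ).Adj (r i) (r j) :=
  adj_iff.mpr ⟨by simpa using h, Or.inl ⟨⟨i, rfl⟩, ⟨j, rfl⟩⟩⟩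

lemma not_adj_of_ne_one {x y : G} (hx : x ≠ 1) (hy : y ≠ 1)
    (hxr : ∀ i, x ≠ r i) : ¬ (Γ).Adj x y := by
  intro h
  rcases adj_iff.mp h with ⟨-, ⟨⟨i, hi⟩, -⟩ | rfl | rfl⟩
  · exact hxr i hi
  · exact hx rfl
  · exact hy rfl

lemma ne_one_of_not_adj {x y : G} (hne : x ≠ y) (h : ¬ (Γ).Adj x y) : x ≠ 1 ∧ y ≠ 1 := by
  constructor
  · rintro rfl; exact h (adj_one (Ne.symm hne))
  · rintro rfl; exact h ((adj_one hne).symm)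

lemma dist_le_two (x y : G) : (Γ).dist x y ≤ 2 := by
  rcases eq_or_ne x y with rfl | hne
  · simp only [SimpleGraph.dist_self]; omega
  by_cases hadj : (Γ).Adj x y
  · exact le_trans (le_of_eq (SimpleGraph.dist_eq_one_iff_adj.mpr hadj)) one_le_two
  obtain ⟨hx, hy⟩ := ne_one_of_not_adj hne hadj
  have h := SimpleGraph.dist_le (((adj_one hx).symm.toWalk.append (adj_one hy).toWalk))
  simpa using h

lemma reachable (x y : G) : (Γ).Reachable x y := by
  rcases eq_or_ne x y with rfl | hne
  · exact SimpleGraph.Reachable.refl x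
  by_cases hadj : (Γ).Adj x y
  · exact hadj.reachable
  obtain ⟨hx, hy⟩ := ne_one_of_not_adj hne hadj
  exact ((adj_one hx).symm.reachable).trans (adj_one hy).reachable

lemma dist_eq_two {x y : G} (hne : x ≠ y) (hadj : ¬ (Γ).Adj x y) : (Γ).dist x y = 2 := by
  have h0 : 0 < (Γ).dist x y := (reachable x y).pos_dist_of_ne hne
  have h1 : (Γ).dist x y ≠ 1 := fun h => hadj (SimpleGraph.dist_eq_one_iff_adj.mp h)
  have h2 := dist_le_two x y
  omega

lemma dist_adj {x y : G} (h : (Γ).Adj x y) : (Γ).dist x y = 1 :=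
  SimpleGraph.dist_eq_one_iff_adj.mpr h


lemma neighborSet_sr_zero : (Γ).neighborSet (sr 0) = {(1 : G)} := by
  ext y
  simp only [SimpleGraph.mem_neighborSet, Set.mem_singleton_iff]
  constructor
  · intro h
    rcases adj_iff.mp h with ⟨hne, ⟨⟨i, hi⟩, -⟩ | h1 | rfl⟩
    · exact absurd hi (by simp)
    · exact absurd h1 (sr_ne_one 0)
    · rfl
  · rintro rfl
    exact (adj_one (sr_ne_one 0)).symm

lemma neighborSet_nonempty (v : G) (hn : 3 ≤ n) : ((Γ).neighborSet v).Nonempty := by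
  rcases eq_or_ne v 1 with rfl | hv
  · exact ⟨sr 0, adj_one (sr_ne_one 0)⟩
  · exact ⟨1, (adj_one hv).symm⟩

lemma part_i (hn : 3 ≤ n) : minDeg (Γ) = 1 := by
  have h1 : (1:ℕ) ∈ {k | ∃ v : G, ((Γ).neighborSet v).ncard = k} :=
    ⟨sr 0, by rw [neighborSet_sr_zero]; exact Set.ncard_singleton 1⟩
  refine le_antisymm (Nat.sInf_le h1) ?_
  rw [Nat.one_le_iff_ne_zero]
  intro h0
  rw [minDeg, Nat.sInf_eq_zero] at h0
  rcases h0 with h0 | h0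
  · obtain ⟨v, hv⟩ := h0
    rw [Set.ncard_eq_zero (Set.toFinite _)] at hv
    exact (neighborSet_nonempty v hn).ne_empty hv
  · exact Set.eq_empty_iff_forall_notMem.mp h0 1 h1


lemma one_ne_zero' (hn : 3 ≤ n) : (1 : ZMod n) ≠ 0 := by
  haveI : Fact (1 < n) := ⟨by omega⟩
  exact one_ne_zero

lemma r_one_ne_one (hn : 3 ≤ n) : (r 1 : G) ≠ 1 := by
  rw [one_def]
  intro h; exact one_ne_zero' hn (by injection h)

lemma sr_not_r (i j : ZMod n) : (sr i : G) ≠ r j := by simp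

lemma range_sr_ncard : (Set.range (sr : ZMod n → G)).ncard = n := by
  rw [← Nat.card_coe_set_eq, Nat.card_range_of_injective (fun a b h => by injection h),
    Nat.card_zmod]

lemma compl_range_r : (Set.range (r : ZMod n → G))ᶜ = Set.range (sr : ZMod n → G) := by
  ext x
  cases x with
  | r i => simp [Set.mem_range]
  | sr i => simp [Set.mem_range]

lemma part_ii (hn : 3 ≤ n) : indepNum (Γ) = n + 1 := by
  set S := {k | ∃ s : Set G, IsIndepSet' (Γ) s ∧ s.ncard = k} with hS
  have hub : ∀ k ∈ S, k ≤ n + 1 := by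
    rintro k ⟨s, hs, rfl⟩
    have hsplit : s = (s ∩ Set.range (r : ZMod n → G)) ∪ (s \ Set.range (r : ZMod n → G)) :=
      (Set.inter_union_diff s _).symm
    have h1 : (s ∩ Set.range (r : ZMod n → G)).ncard ≤ 1 := by
      rw [Set.ncard_le_one_iff (Set.toFinite _)]
      rintro a b ⟨ha, i, rfl⟩ ⟨hb, j, rfl⟩
      by_contra hne
      have hij : i ≠ j := fun h => hne (by rw [h])
      exact hs ha hb hne (adj_r_r hij)
    have h2 : (s \ Set.range (r : ZMod n → G)).ncard ≤ n := by
      have hsub : s \ Set.range (r : ZMod n → G) ⊆ Set.range (sr : ZMod n → G) := by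
        rw [← compl_range_r]
        exact Set.diff_subset_compl _ _
      calc (s \ Set.range (r : ZMod n → G)).ncard
          ≤ (Set.range (sr : ZMod n → G)).ncard := Set.ncard_le_ncard hsub (Set.toFinite _)
        _ = n := range_sr_ncard
      -- done
    calc s.ncard ≤ (s ∩ Set.range (r : ZMod n → G)).ncard
          + (s \ Set.range (r : ZMod n → G)).ncard := by
          conv_lhs => rw [hsplit]
          exact Set.ncard_union_le _ _
      _ ≤ 1 + n := Nat.add_le_add h1 h2
      _ = n + 1 := Nat.add_comm 1 n
  have hmem : (n + 1) ∈ S := by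
    refine ⟨insert (r 1) (Set.range (sr : ZMod n → G)), ?_, ?_⟩
    · rintro x hx y hy hne hadj
      rcases adj_iff.mp hadj with ⟨-, ⟨⟨i, rfl⟩, ⟨j, rfl⟩⟩ | rfl | rfl⟩
      · rcases hx with hx | ⟨a, ha⟩
        · rcases hy with hy | ⟨b, hb⟩
          · exact hne (hx.symm ▸ hy.symm ▸ rfl)
          · exact sr_not_r b j hb
        · exact sr_not_r a i ha
      · rcases hx with hx | ⟨a, ha⟩
        · exact r_one_ne_one hn hx.symm
        · exact sr_ne_one a ha
      · rcases hy with hy | ⟨a, ha⟩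
        · exact r_one_ne_one hn hy.symm
        · exact sr_ne_one a ha
    · rw [Set.ncard_insert_of_notMem (by simp) (Set.toFinite _), range_sr_ncard]
  exact le_antisymm (csSup_le ⟨n + 1, hmem⟩ hub) (le_csSup ⟨n + 1, hub⟩ hmem)


/-- The two endpoints of an edge, as a `Finset`. -/
def edgeVerts (e : Sym2 G) : Finset G :=
  Sym2.lift ⟨fun a b => {a, b}, fun a b => Finset.pair_comm a b⟩ e

@[simp] lemma mem_edgeVerts {v : G} {e : Sym2 G} : v ∈ edgeVerts e ↔ v ∈ e := by
  induction e with
  | _ a b => simp [edgeVerts, Sym2.mem_iff]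

lemma card_edgeVerts {e : Sym2 G} (h : ¬ e.IsDiag) : (edgeVerts e).card = 2 := by
  induction e with
  | _ a b =>
    rw [Sym2.mk_isDiag_iff] at h
    exact Finset.card_pair h

lemma refl_edge {e : Sym2 G} (he : e ∈ (Γ).edgeSet) {a : ZMod n} (ha : (sr a : G) ∈ e) :
    e = s(sr a, (1 : G)) := by
  induction e with
  | _ x y =>
    rw [SimpleGraph.mem_edgeSet] at he
    rcases Sym2.mem_iff.mp ha with rfl | rfl
    · rcases adj_iff.mp he with ⟨-, ⟨⟨i, hi⟩, -⟩ | h1 | rfl⟩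
      · exact absurd hi (sr_not_r a i)
      · exact absurd h1 (sr_ne_one a)
      · rfl
    · rcases adj_iff.mp he with ⟨-, ⟨-, ⟨j, hj⟩⟩ | rfl | h1⟩
      · exact absurd hj (sr_not_r a j)
      · exact Sym2.eq_swap
      · exact absurd h1 (sr_ne_one a)

lemma matching_bound {M : Set (Sym2 G)} (hM : IsMatching' (Γ) M) :
    M.ncard ≤ (n + 1) / 2 := by
  obtain ⟨hsub, hpair⟩ := hM
  have hMfin : M.Finite := Set.toFinite M
  set F := hMfin.toFinset with hF
  have hmemF : ∀ e, e ∈ F ↔ e ∈ M := fun e => Set.Finite.mem_toFinset hMfin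
  set T := F.biUnion edgeVerts with hT
  have hdisj : ∀ x ∈ F, ∀ y ∈ F, x ≠ y → Disjoint (edgeVerts x) (edgeVerts y) := by
    intro x hx y hy hxy
    rw [Finset.disjoint_left]
    intro v hvx hvy
    exact hpair ((hmemF x).mp hx) ((hmemF y).mp hy) hxy v (mem_edgeVerts.mp hvx)
      (mem_edgeVerts.mp hvy)
  have hcardT : T.card = 2 * F.card := by
    rw [hT, Finset.card_biUnion hdisj]
    rw [Finset.sum_congr rfl (fun e he => card_edgeVerts
      ((Γ).not_isDiag_of_mem_edgeSet (hsub ((hmemF e).mp he))))]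
    rw [Finset.sum_const, smul_eq_mul, mul_comm]
  set Rfin : Finset G := Finset.univ.image (fun i : ZMod n => (r i : G)) with hRfin
  have hcardR : Rfin.card = n := by
    rw [hRfin, Finset.card_image_of_injective _ (fun a b h => by injection h)]
    simp [ZMod.card]
  have hsdiff : (T \ Rfin).card ≤ 1 := by
    rw [Finset.card_le_one]
    intro u hu v hv
    rw [Finset.mem_sdiff] at hu hv
    obtain ⟨hu1, hu2⟩ := hu
    obtain ⟨hv1, hv2⟩ := hv
    obtain ⟨eu, heu, hueu⟩ := Finset.mem_biUnion.mp hu1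
    obtain ⟨ev, hev, hvev⟩ := Finset.mem_biUnion.mp hv1
    have hur : ∃ a, u = sr a := by
      cases u with
      | r i => exact absurd (Finset.mem_image.mpr ⟨i, Finset.mem_univ i, rfl⟩) hu2
      | sr a => exact ⟨a, rfl⟩
    have hvr : ∃ b, v = sr b := by
      cases v with
      | r i => exact absurd (Finset.mem_image.mpr ⟨i, Finset.mem_univ i, rfl⟩) hv2
      | sr b => exact ⟨b, rfl⟩
    obtain ⟨a, rfl⟩ := hur
    obtain ⟨b, rfl⟩ := hvr
    have heu' : eu = s(sr a, (1:G)) :=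
      refl_edge (hsub ((hmemF eu).mp heu)) (mem_edgeVerts.mp hueu)
    have hev' : ev = s(sr b, (1:G)) :=
      refl_edge (hsub ((hmemF ev).mp hev)) (mem_edgeVerts.mp hvev)
    have heq : eu = ev := by
      by_contra hne
      exact hpair ((hmemF eu).mp heu) ((hmemF ev).mp hev) hne 1
        (heu' ▸ Sym2.mem_mk_right _ _) (hev' ▸ Sym2.mem_mk_right _ _)
    rw [heq, hev'] at heu'
    rcases Sym2.eq_iff.mp heu' with ⟨h1, -⟩ | ⟨h1, -⟩
    · exact h1.symm ▸ rfl
    · exact absurd h1 (sr_ne_one b)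
  have hcardT2 : T.card ≤ n + 1 := by
    have := Finset.card_inter_add_card_sdiff T Rfin
    have h1 : (T ∩ Rfin).card ≤ n := by
      calc (T ∩ Rfin).card ≤ Rfin.card := Finset.card_le_card Finset.inter_subset_right
        _ = n := hcardR
    omega
  have hle : 2 * F.card ≤ n + 1 := hcardT ▸ hcardT2
  have : M.ncard = F.card := by
    rw [Set.ncard_eq_toFinset_card _ hMfin]
  rw [this]
  omega


lemma cast_inj_of_lt {a b : ℕ} (ha : a < n) (hb : b < n) (h : (a : ZMod n) = b) : a = b := by
  rw [← ZMod.val_cast_of_lt ha, ← ZMod.val_cast_of_lt hb, h]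

lemma part_iii (hn : 3 ≤ n) : matchingNum (Γ) = (n + 1) / 2 := by
  set m := (n - 1) / 2 with hm
  set f : ℕ → Sym2 G := fun k => s((r ((2*k+1 : ℕ) : ZMod n) : G), (r ((2*k+2 : ℕ) : ZMod n) : G))
    with hf
  have hidx : ∀ k < m, 2*k+2 < n := by intro k hk; omega
  -- the cast of indices is injective in the relevant range
  have hrinj : ∀ (a b : ℕ), a < n → b < n → (r (a : ZMod n) : G) = r (b : ZMod n) → a = b := by
    intro a b ha hb h
    exact cast_inj_of_lt ha hb (by injection h)
  set F : Finset (Sym2 G) := insert s((1:G), (sr 0 : G)) ((Finset.range m).image f) with hFdef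
  have hnotmem : s((1:G), (sr 0 : G)) ∉ (Finset.range m).image f := by
    intro h
    obtain ⟨k, -, hk⟩ := Finset.mem_image.mp h
    rcases Sym2.eq_iff.mp hk with ⟨-, h2⟩ | ⟨h2, -⟩ <;> simp at h2
  have hinj : Set.InjOn f (Finset.range m) := by
    intro k hk k' hk' h
    rw [Finset.coe_range, Set.mem_Iio] at hk hk'
    rcases Sym2.eq_iff.mp h with ⟨h1, -⟩ | ⟨h1, -⟩
    · have := hrinj _ _ (by omega) (by omega) h1
      omega
    · have := hrinj _ _ (by omega) (by omega) h1
      omega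
  have hcardF : F.card = m + 1 := by
    rw [hFdef, Finset.card_insert_of_notMem hnotmem, Finset.card_image_of_injOn hinj,
      Finset.card_range]
  have hvf : ∀ (v : G) (k : ℕ), k < m → v ∈ f k →
      ∃ a : ℕ, a < n ∧ 0 < a ∧ v = r (a : ZMod n) ∧ (a = 2*k+1 ∨ a = 2*k+2) := by
    intro v k hk hv
    rcases Sym2.mem_iff.mp hv with rfl | rfl
    · exact ⟨2*k+1, by omega, by omega, rfl, Or.inl rfl⟩
    · exact ⟨2*k+2, by omega, by omega, rfl, Or.inr rfl⟩
  have hmatch : IsMatching' (Γ) (↑F : Set (Sym2 G)) := by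
    constructor
    · intro e he
      rw [Finset.mem_coe, hFdef, Finset.mem_insert] at he
      rcases he with rfl | he
      · exact adj_one (sr_ne_one 0)
      · obtain ⟨k, hk, rfl⟩ := Finset.mem_image.mp he
        rw [Finset.mem_range] at hk
        refine adj_r_r (fun h => ?_)
        have := hrinj _ _ (by omega) (by omega) (congrArg r h)
        omega
    · intro e he e' he' hne v hve hve'
      rw [Finset.mem_coe, hFdef, Finset.mem_insert] at he he'
      rcases he with rfl | he
      · rcases he' with rfl | he'
        · exact hne rfl
        · obtain ⟨k, hk, rfl⟩ := Finset.mem_image.mp he'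
          rw [Finset.mem_range] at hk
          obtain ⟨a, ha, ha0, rfl, -⟩ := hvf v k hk hve'
          rcases Sym2.mem_iff.mp hve with h1 | h1
          · rw [one_def] at h1
            have h2 : ((a : ℕ) : ZMod n) = 0 := by injection h1
            have h3 : a = 0 := by
              have h4 := congrArg ZMod.val h2
              rwa [ZMod.val_cast_of_lt ha, ZMod.val_zero] at h4
            omega
          · exact absurd h1 (by simp)
      · obtain ⟨k, hk, rfl⟩ := Finset.mem_image.mp he
        rw [Finset.mem_range] at hk
        obtain ⟨a, ha, ha0, rfl, hcase⟩ := hvf v k hk hve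
        rcases he' with rfl | he'
        · rcases Sym2.mem_iff.mp hve' with h1 | h1
          · rw [one_def] at h1
            have h2 : ((a : ℕ) : ZMod n) = 0 := by injection h1
            have h3 : a = 0 := by
              have h4 := congrArg ZMod.val h2
              rwa [ZMod.val_cast_of_lt ha, ZMod.val_zero] at h4
            omega
          · exact absurd h1 (by simp)
        · obtain ⟨k', hk', rfl⟩ := Finset.mem_image.mp he'
          rw [Finset.mem_range] at hk'
          obtain ⟨a', ha', ha0', heq, hcase'⟩ := hvf _ k' hk' hve'
          have hkk' : k ≠ k' := fun h => hne (by rw [h])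
          have := hrinj _ _ ha ha' (by rw [← heq])
          omega
  have hmem : (n + 1) / 2 ∈ {k | ∃ M : Set (Sym2 G), IsMatching' (Γ) M ∧ M.ncard = k} := by
    refine ⟨↑F, hmatch, ?_⟩
    rw [Set.ncard_coe_finset, hcardF]
    omega
  have hub : ∀ k ∈ {k | ∃ M : Set (Sym2 G), IsMatching' (Γ) M ∧ M.ncard = k}, k ≤ (n + 1) / 2 := by
    rintro k ⟨M, hM, rfl⟩
    exact matching_bound hM
  exact le_antisymm (csSup_le ⟨_, hmem⟩ hub) (le_csSup ⟨_, hub⟩ hmem)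


lemma resolver_eq {u v z : G} (hu : u ≠ 1) (hv : v ≠ 1) (huv : u ≠ v)
    (h : (Γ).dist z u = (Γ).dist z v + (Γ).dist v u) : z = u ∨ z = v := by
  by_cases hzv : z = v
  · exact Or.inr hzv
  by_cases hzu : z = u
  · exact Or.inl hzu
  exfalso
  have hvu : 0 < (Γ).dist v u := (reachable v u).pos_dist_of_ne (fun e => huv e.symm)
  have hzv' : 0 < (Γ).dist z v := (reachable z v).pos_dist_of_ne hzv
  have hle : (Γ).dist z u ≤ 2 := dist_le_two z u
  have h1 : (Γ).dist z v = 1 ∧ (Γ).dist v u = 1 := by omega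
  have hadj_zv : (Γ).Adj z v := SimpleGraph.dist_eq_one_iff_adj.mp h1.1
  have hadj_vu : (Γ).Adj v u := SimpleGraph.dist_eq_one_iff_adj.mp h1.2
  have hnadj_zu : ¬ (Γ).Adj z u := by
    intro hadj
    have := SimpleGraph.dist_eq_one_iff_adj.mpr hadj
    omega
  have hz1 : z ≠ 1 := (ne_one_of_not_adj hzu hnadj_zu).1
  obtain ⟨hne', ⟨⟨i, rfl⟩, ⟨j, rfl⟩⟩ | h' | h'⟩ := adj_iff.mp hadj_vu
  · -- v = r i, u = r j
    rcases adj_iff.mp hadj_zv with ⟨-, ⟨⟨k, rfl⟩, -⟩ | h'' | h''⟩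
    · exact hnadj_zu (adj_r_r (fun e => hzu (by rw [e])))
    · exact hz1 h''
    · exact hv h''
  · exact hv h'
  · exact hu h'

lemma part_iv (hn : 3 ≤ n) : sdim (Γ) = 2 * (n - 1) := by
  set S := {k | ∃ U : Set G,
    (∀ u v : G, u ≠ v → ∃ z ∈ U,
      (Γ).dist z u = (Γ).dist z v + (Γ).dist v u ∨
      (Γ).dist z v = (Γ).dist z u + (Γ).dist u v) ∧
    U.ncard = k} with hS
  have hsr0 : (sr 0 : G) ≠ 1 := sr_ne_one 0
  have hr1 : (r 1 : G) ≠ 1 := r_one_ne_one hn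
  have hmem : 2 * (n - 1) ∈ S := by
    refine ⟨Set.univ \ {(1:G), sr 0}, ?_, ?_⟩
    · intro u v huv
      by_cases hu : u ∈ Set.univ \ {(1:G), sr 0}
      · exact ⟨u, hu, Or.inr (by rw [SimpleGraph.dist_self, zero_add])⟩
      by_cases hv : v ∈ Set.univ \ {(1:G), sr 0}
      · exact ⟨v, hv, Or.inl (by rw [SimpleGraph.dist_self, zero_add])⟩
      have hu' : u = 1 ∨ u = sr 0 := by
        by_contra hc
        push_neg at hc
        exact hu ⟨Set.mem_univ u, by simp [hc.1, hc.2]⟩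
      have hv' : v = 1 ∨ v = sr 0 := by
        by_contra hc
        push_neg at hc
        exact hv ⟨Set.mem_univ v, by simp [hc.1, hc.2]⟩
      have hzmem : (r 1 : G) ∈ Set.univ \ {(1:G), sr 0} :=
        ⟨Set.mem_univ _, by simp [hr1]⟩
      have d1 : (Γ).dist (r 1 : G) 1 = 1 := dist_adj (adj_one hr1).symm
      have d2 : (Γ).dist (r 1 : G) (sr 0) = 2 := by
        refine dist_eq_two (by simp) ?_
        intro hadj
        rcases adj_iff.mp hadj with ⟨-, ⟨-, ⟨j, hj⟩⟩ | h' | h'⟩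
        · exact sr_not_r 0 j hj
        · exact hr1 h'
        · exact hsr0 h'
      have d3 : (Γ).dist (1:G) (sr 0) = 1 := dist_adj (adj_one hsr0)
      have d4 : (Γ).dist (sr 0 : G) 1 = 1 := dist_adj (adj_one hsr0).symm
      rcases hu' with rfl | rfl <;> rcases hv' with rfl | rfl
      · exact absurd rfl huv
      · exact ⟨r 1, hzmem, Or.inr (by rw [d1, d2, d3])⟩
      · exact ⟨r 1, hzmem, Or.inl (by rw [d1, d2, d3])⟩
      · exact absurd rfl huv
    · rw [Set.ncard_diff (Set.subset_univ _) (Set.toFinite _), Set.ncard_univ,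
        DihedralGroup.nat_card, Set.ncard_pair (Ne.symm hsr0)]
      omega
  have hlb : ∀ k ∈ S, 2 * (n - 1) ≤ k := by
    rintro k ⟨U, hres, rfl⟩
    have hsub : ∀ u v : G, u ∉ U → v ∉ U → u ≠ 1 → v ≠ 1 → u = v := by
      intro u v hu hv hu1 hv1
      by_contra hne
      obtain ⟨z, hzU, hz⟩ := hres u v hne
      rcases hz with hz | hz
      · rcases resolver_eq hu1 hv1 hne hz with rfl | rfl
        · exact hu hzU
        · exact hv hzU
      · rcases resolver_eq hv1 hu1 (Ne.symm hne) hz with rfl | rfl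
        · exact hv hzU
        · exact hu hzU
    have h1 : ((Set.univ \ U) \ {(1:G)}).ncard ≤ 1 := by
      rw [Set.ncard_le_one (Set.toFinite _)]
      rintro a ⟨⟨-, ha⟩, ha1⟩ b ⟨⟨-, hb⟩, hb1⟩
      exact hsub a b ha hb ha1 hb1
    have h2 : (Set.univ \ U).ncard ≤ 2 := by
      have hsub2 : Set.univ \ U ⊆ insert (1:G) ((Set.univ \ U) \ {(1:G)}) := by
        intro x hx
        rcases eq_or_ne x 1 with rfl | hx1
        · exact Set.mem_insert _ _
        · exact Set.mem_insert_of_mem _ ⟨hx, hx1⟩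
      calc (Set.univ \ U).ncard
          ≤ (insert (1:G) ((Set.univ \ U) \ {(1:G)})).ncard :=
            Set.ncard_le_ncard hsub2 (Set.toFinite _)
        _ ≤ ((Set.univ \ U) \ {(1:G)}).ncard + 1 := Set.ncard_insert_le _ _
        _ ≤ 2 := by omega
    have h3 : U.ncard + (Set.univ \ U).ncard = 2 * n := by
      rw [← Set.compl_eq_univ_diff, Set.ncard_add_ncard_compl, DihedralGroup.nat_card]
    omega
  exact le_antisymm (Nat.sInf_le hmem) (le_csInf ⟨_, hmem⟩ hlb)

end

end Stmt17

/-- For the enhanced power graph of the dihedral group `D_{2n}` (`n ≥ 3`):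
(i) the minimum degree is `1`; (ii) the independence number is `n + 1`;
(iii) the matching number is `⌈n/2⌉`; (iv) the strong metric dimension is `2(n − 1)`. -/
theorem stmt_17 (n : ℕ) (hn : 3 ≤ n) [NeZero n] :
    minDeg (enhancedPowerGraph (DihedralGroup n)) = 1 ∧
    indepNum (enhancedPowerGraph (DihedralGroup n)) = n + 1 ∧
    matchingNum (enhancedPowerGraph (DihedralGroup n)) = (n + 1) / 2 ∧
    sdim (enhancedPowerGraph (DihedralGroup n)) = 2 * (n - 1) := by
  exact ⟨Stmt17.part_i hn, Stmt17.part_ii hn, Stmt17.part_iii hn, Stmt17.part_iv hn⟩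
end

section
/- For every n ≥ 2, the enhanced power graph of the semidihedral group SD_{8n} = ⟨a, b : a^{4n} = b^2 = e, ba = a^{2n−1}b⟩ of order 8n is a perfect graph. -/
open SimpleGraph in
lemma perfect_of_chains {V : Type*} [Fintype V] (g : SimpleGraph V) (C : V → Set V)
    (hmem : ∀ v, v ∈ C v)
    (hclique : ∀ v, (C v).Pairwise g.Adj)
    (hadj : ∀ u v, g.Adj u v → (C u ⊆ C v ∧ v ∉ C u) ∨ (C v ⊆ C u ∧ u ∉ C v)) :
    IsPerfect g := by
  classical
  intro s
  set H : SimpleGraph s := g.induce s with hH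
  -- the counting function
  set c : s → ℕ := fun v => (C ↑v ∩ s).ncard with hc
  have hc1 : ∀ v : s, 1 ≤ c v := by
    intro v
    have : (↑v : V) ∈ C ↑v ∩ s := ⟨hmem _, v.2⟩
    have hne : (C (↑v : V) ∩ s).Nonempty := ⟨_, this⟩
    have := Set.ncard_pos (s := C (↑v : V) ∩ s) (Set.toFinite _)
    exact this.mpr hne
  have hstrict : ∀ u v : s, H.Adj u v → c u ≠ c v := by
    intro u v huv
    have hadj' : g.Adj ↑u ↑v := huv
    have hne : (↑u : V) ≠ ↑v := hadj'.ne
    rcases hadj _ _ hadj' with ⟨hsub, hnm⟩ | ⟨hsub, hnm⟩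
    · have hss : (C ↑u ∩ s) ⊂ (C ↑v ∩ s) := by
        constructor
        · exact Set.inter_subset_inter_left _ hsub
        · intro hle
          exact hnm (hle ⟨hmem _, v.2⟩).1
      exact (Set.ncard_lt_ncard hss (Set.toFinite _)).ne
    · have hss : (C ↑v ∩ s) ⊂ (C ↑u ∩ s) := by
        constructor
        · exact Set.inter_subset_inter_left _ hsub
        · intro hle
          exact hnm (hle ⟨hmem _, u.2⟩).1
      exact (Set.ncard_lt_ncard hss (Set.toFinite _)).ne'
  -- M = sup of c
  by_cases hs : Nonempty s
  · obtain ⟨v0, hv0⟩ := Finite.exists_max c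
    set M := c v0 with hM
    -- Coloring with M colors
    have hcol : H.Colorable M := by
      refine ⟨Coloring.mk (fun v => ⟨c v - 1, ?_⟩) ?_⟩
      · have h1 := hc1 v
        have h2 := hv0 v
        omega
      · intro u v huv h
        have := hstrict u v huv
        have h1 := hc1 u
        have h2 := hc1 v
        have := Fin.mk.injEq (c u - 1) _ (c v - 1) _ ▸ h
        simp only [Fin.mk.injEq] at h
        omega
    -- clique of size M
    have hKclique : ∃ t : Finset s, H.IsNClique M t := by
      set K : Set s := {w : s | (↑w : V) ∈ C ↑v0} with hK
      refine ⟨K.toFinset, ?_, ?_⟩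
      · intro x hx y hy hxy
        simp only [Finset.mem_coe, Set.mem_toFinset, hK, Set.mem_setOf_eq] at hx hy
        have : (↑x : V) ≠ ↑y := fun h => hxy (Subtype.ext h)
        exact hclique _ hx hy this
      · have : Subtype.val '' K = C ↑v0 ∩ s := by
          ext w
          constructor
          · rintro ⟨w', hw', rfl⟩; exact ⟨hw', w'.2⟩
          · rintro ⟨h1, h2⟩; exact ⟨⟨w, h2⟩, h1, rfl⟩
        have h2 : K.ncard = M := by
          rw [← Set.ncard_image_of_injective K Subtype.val_injective, this]
        rw [← Set.ncard_eq_toFinset_card']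
        exact h2
    obtain ⟨t, ht⟩ := hKclique
    -- cliqueNum' H = M
    have hub : ∀ k ∈ {k | ∃ t : Finset s, H.IsNClique k t}, k ≤ M := by
      rintro k ⟨t', ht'⟩
      by_contra hk
      push_neg at hk
      have : H.CliqueFree (M + 1) := hcol.cliqueFree (Nat.lt_succ_self M)
      obtain ⟨t'', ht''sub, ht''card⟩ := Finset.exists_subset_card_eq (s := t') (n := M + 1) (by rw [ht'.2]; omega)
      exact this t'' ⟨ht'.1.subset ht''sub, ht''card⟩
    have hclnum : cliqueNum' H = M := by
      apply le_antisymm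
      · exact csSup_le ⟨M, t, ht⟩ hub
      · exact le_csSup ⟨M, hub⟩ ⟨t, ht⟩
    rw [hclnum]
    apply le_antisymm
    · exact hcol.chromaticNumber_le
    · have := ht.1.card_le_chromaticNumber
      rw [ht.2] at this
      exact this
  · -- s empty
    have : IsEmpty s := not_nonempty_iff.mp hs
    have hcol : H.Colorable 0 := ⟨Coloring.mk (fun v => (this.false v).elim) (fun {u} => (this.false u).elim)⟩
    have hclnum : cliqueNum' H = 0 := by
      have hset : {k | ∃ t : Finset s, H.IsNClique k t} = {0} := by
        ext k
        simp only [Set.mem_setOf_eq, Set.mem_singleton_iff]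
        constructor
        · rintro ⟨t, ht⟩
          have : t = ∅ := Finset.eq_empty_of_isEmpty t
          rw [this] at ht
          exact SimpleGraph.isNClique_empty.mp ht
        · rintro rfl
          exact ⟨∅, SimpleGraph.isNClique_empty.mpr rfl⟩
      rw [cliqueNum', hset, csSup_singleton]
    rw [hclnum]
    apply le_antisymm
    · exact_mod_cast hcol.chromaticNumber_le
    · simp

/-- For every `n ≥ 2`, the enhanced power graph of the semidihedral group
`SD_{8n} = ⟨a, b : a^{4n} = b² = e, ba = a^{2n−1}b⟩` of order `8n` is a perfect graph. -/
theorem stmt_18 {G : Type*} [Group G] [Fintype G] (n : ℕ) (hn : 2 ≤ n)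
    (a b : G) (ha : a ^ (4 * n) = 1) (hb : b ^ 2 = 1) (hba : b * a = a ^ (2 * n - 1) * b)
    (hcard : Fintype.card G = 8 * n) (hgen : Subgroup.closure {a, b} = ⊤) :
    IsPerfect (enhancedPowerGraph G) := by
  classical
  set N := Subgroup.zpowers a with hN
  have hb2 : b * b = 1 := by rw [← pow_two]; exact hb
  have hbinv : b⁻¹ = b := by rw [inv_eq_iff_mul_eq_one]; exact hb2
  have hconj : b * a * b⁻¹ = a ^ (2 * n - 1) := by
    rw [hba, mul_inv_cancel_right]
  have hcast : a ^ (2 * n - 1) = a ^ (((2 * n : ℕ) : ℤ) - 1) := by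
    rw [← zpow_natCast]
    congr 1
    omega
  have hconjzk : ∀ k : ℤ, b * a ^ k * b⁻¹ = (a ^ (((2 * n : ℕ) : ℤ) - 1)) ^ k := by
    intro k
    rw [← conj_zpow, hconj, hcast]
  have hbNb : ∀ x ∈ N, b * x * b⁻¹ ∈ N := by
    intro x hx
    obtain ⟨k, rfl⟩ := Subgroup.mem_zpowers_iff.mp hx
    rw [hconjzk]
    exact Subgroup.zpow_mem _ (Subgroup.zpow_mem _ (Subgroup.mem_zpowers a) _) _
  have htN : a ^ (2 * n) ∈ N := Subgroup.pow_mem _ (Subgroup.mem_zpowers a) _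
  -- decomposition G = N ∪ N b
  have decomp : ∀ x : G, x ∈ N ∨ x * b ∈ N := by
    let S : Subgroup G :=
      { carrier := {x | x ∈ N ∨ x * b ∈ N}
        one_mem' := Or.inl N.one_mem
        mul_mem' := by
          rintro x y (hx | hx) (hy | hy)
          · exact Or.inl (N.mul_mem hx hy)
          · right; rw [mul_assoc]; exact N.mul_mem hx hy
          · right
            have hm := hbNb y hy
            rw [hbinv] at hm
            have hid : x * y * b = (x * b) * (b⁻¹ * y * b) := by group
            rw [hid, hbinv]
            exact N.mul_mem hx hm
          · left
            have hm := hbNb (y * b) hy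
            rw [hbinv] at hm
            have hid : x * y = (x * b) * (b⁻¹ * (y * b) * b⁻¹) := by group
            rw [hid, hbinv]
            exact N.mul_mem hx hm
        inv_mem' := by
          rintro x (hx | hx)
          · exact Or.inl (N.inv_mem hx)
          · right
            have hm := hbNb (x * b) hx
            have hid : b * (x * b) * b⁻¹ = b * x := by group
            rw [hid] at hm
            have h2 : x⁻¹ * b = (b * x)⁻¹ := by rw [mul_inv_rev, hbinv]
            rw [h2]
            exact N.inv_mem hm }
    have hST : Subgroup.closure ({a, b} : Set G) ≤ S := by
      rw [Subgroup.closure_le]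
      rintro x (rfl | rfl)
      · exact Or.inl (Subgroup.mem_zpowers _)
      · exact Or.inr (by rw [hb2]; exact N.one_mem)
    intro x
    exact hST (by rw [hgen]; trivial)
  -- index bound and order of a
  have hidx2 : N.index ≤ 2 := by
    rw [Subgroup.index_eq_card]
    have hsurj : Function.Surjective
        (fun i : Bool => cond i (QuotientGroup.mk b : G ⧸ N) (QuotientGroup.mk 1)) := by
      intro q
      obtain ⟨x, rfl⟩ := QuotientGroup.mk_surjective q
      rcases decomp x with h | h
      · refine ⟨false, ?_⟩
        show (QuotientGroup.mk 1 : G ⧸ N) = QuotientGroup.mk x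
        rw [QuotientGroup.eq]
        simpa using h
      · refine ⟨true, ?_⟩
        show (QuotientGroup.mk b : G ⧸ N) = QuotientGroup.mk x
        rw [QuotientGroup.eq, hbinv]
        have hm := hbNb (x * b) h
        have hid : b * (x * b) * b⁻¹ = b * x := by group
        rw [hid] at hm
        exact hm
    calc Nat.card (G ⧸ N) ≤ Nat.card Bool := Nat.card_le_card_of_surjective _ hsurj
      _ = 2 := by simp [Nat.card_eq_fintype_card]
  have hordera : orderOf a = 4 * n := by
    have hd : orderOf a ∣ 4 * n := orderOf_dvd_of_pow_eq_one ha
    have hle : orderOf a ≤ 4 * n := Nat.le_of_dvd (by omega) hd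
    have hNc : Nat.card N = orderOf a := Nat.card_zpowers a
    have hmul := Subgroup.index_mul_card (H := N)
    rw [hNc, Nat.card_eq_fintype_card, hcard] at hmul
    have h8 : 8 * n ≤ 2 * orderOf a := by
      calc 8 * n = N.index * orderOf a := hmul.symm
        _ ≤ 2 * orderOf a := Nat.mul_le_mul_right _ hidx2
    omega
  have htne : a ^ (2 * n) ≠ 1 := by
    intro h
    have hd := orderOf_dvd_of_pow_eq_one h
    rw [hordera] at hd
    exact absurd (Nat.le_of_dvd (by omega) hd) (by omega)
  have ht2 : a ^ (2 * n) * a ^ (2 * n) = 1 := by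
    rw [← pow_add]
    have h4 : 2 * n + 2 * n = 4 * n := by ring
    rw [h4]; exact ha
  have order2pow : ∀ u : G, u * u = 1 → ∀ j : ℤ, u ^ j = 1 ∨ u ^ j = u := by
    intro u hu j
    have hu2 : u ^ (2 : ℤ) = 1 := by rw [zpow_two]; exact hu
    rcases Int.even_or_odd j with ⟨r, hr⟩ | ⟨r, hr⟩
    · left; subst hr; rw [← two_mul, zpow_mul, hu2, one_zpow]
    · right; subst hr; rw [zpow_add, zpow_mul, hu2, one_zpow, one_mul, zpow_one]
  -- squares of elements outside N
  have hx2 : ∀ x : G, x ∉ N → x * x = 1 ∨ x * x = a ^ (2 * n) := by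
    intro x hx
    rcases decomp x with h | h
    · exact absurd h hx
    · obtain ⟨k, hk⟩ := Subgroup.mem_zpowers_iff.mp h
      have hxeq : x = a ^ k * b := by
        rw [eq_mul_inv_of_mul_eq hk.symm] at *
        rw [eq_mul_inv_of_mul_eq hk.symm, hbinv]
      have hxx : x * x = a ^ k * (a ^ (((2 * n : ℕ) : ℤ) - 1)) ^ k := by
        calc x * x = a ^ k * (b * a ^ k * b⁻¹) * (b * b) := by rw [hxeq]; group
          _ = a ^ k * (b * a ^ k * b⁻¹) := by rw [hb2, mul_one]
          _ = a ^ k * (a ^ (((2 * n : ℕ) : ℤ) - 1)) ^ k := by rw [hconjzk]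
      have hpow : x * x = (a ^ (2 * n)) ^ k := by
        rw [hxx, ← zpow_mul, ← zpow_add, ← zpow_natCast a (2 * n), ← zpow_mul]
        congr 1
        ring
      rcases order2pow (a ^ (2 * n)) ht2 k with h1 | h1
      · left; rw [hpow, h1]
      · right; rw [hpow, h1]
  have hinvN : ∀ x : G, x ∉ N → x⁻¹ ∉ N := by
    intro x hx hc
    apply hx
    have hid : x = (x * x) * x⁻¹ := by group
    rcases hx2 x hx with h | h
    · rw [hid, h, one_mul]; exact hc
    · rw [hid, h]; exact N.mul_mem htN hc
  have hmeminv : ∀ w y : G, y ∈ Subgroup.zpowers w → y ∈ Subgroup.zpowers w⁻¹ := by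
    intro w y hy
    obtain ⟨m, rfl⟩ := Subgroup.mem_zpowers_iff.mp hy
    exact Subgroup.mem_zpowers_iff.mpr ⟨-m, by rw [inv_zpow', neg_neg]⟩
  -- structure of cyclic subgroups generated outside N
  have hstruct : ∀ x : G, x ∉ N → ∀ y ∈ Subgroup.zpowers x,
      y = 1 ∨ y = a ^ (2 * n) ∨ y = x ∨ y = x⁻¹ := by
    intro x hx y hy
    obtain ⟨m, rfl⟩ := Subgroup.mem_zpowers_iff.mp hy
    rcases hx2 x hx with h | h
    · rcases order2pow x h m with h1 | h1
      · exact Or.inl h1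
      · exact Or.inr (Or.inr (Or.inl h1))
    · have hx4 : (x * x) * (x * x) = 1 := by rw [h]; exact ht2
      rcases Int.even_or_odd m with ⟨r, hr⟩ | ⟨r, hr⟩
      · subst hr
        have heq : x ^ (r + r) = (x * x) ^ r := by
          rw [← two_mul, zpow_mul, zpow_two]
        rcases order2pow (x * x) hx4 r with h1 | h1
        · exact Or.inl (by rw [heq, h1])
        · exact Or.inr (Or.inl (by rw [heq, h1, h]))
      · subst hr
        have heq : x ^ (2 * r + 1) = (x * x) ^ r * x := by
          rw [zpow_add, zpow_mul, zpow_two, zpow_one]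
        rcases order2pow (x * x) hx4 r with h1 | h1
        · exact Or.inr (Or.inr (Or.inl (by rw [heq, h1, one_mul])))
        · refine Or.inr (Or.inr (Or.inr ?_))
          rw [heq, h1, h]
          refine eq_inv_of_mul_eq_one_left ?_
          rw [mul_assoc, h, ht2]
  -- adjacency characterization
  have hadj_iff : ∀ x y : G, (enhancedPowerGraph G).Adj x y ↔
      x ≠ y ∧ ((x ∈ N ∧ y ∈ N) ∨ (x ∉ N ∧ y ∈ Subgroup.zpowers x) ∨
        (y ∉ N ∧ x ∈ Subgroup.zpowers y)) := by
    intro x y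
    constructor
    · rintro ⟨hne, z, hxz, hyz⟩
      refine ⟨hne, ?_⟩
      by_cases hxN : x ∈ N
      · by_cases hyN : y ∈ N
        · exact Or.inl ⟨hxN, hyN⟩
        · refine Or.inr (Or.inr ⟨hyN, ?_⟩)
          have hzN : z ∉ N := fun hz => hyN (Subgroup.zpowers_le.mpr hz hyz)
          rcases hstruct z hzN y hyz with rfl | rfl | rfl | rfl
          · exact absurd N.one_mem hyN
          · exact absurd htN hyN
          · exact hxz
          · exact hmeminv z x hxz
      · refine Or.inr (Or.inl ⟨hxN, ?_⟩)
        have hzN : z ∉ N := fun hz => hxN (Subgroup.zpowers_le.mpr hz hxz)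
        rcases hstruct z hzN x hxz with rfl | rfl | rfl | rfl
        · exact absurd N.one_mem hxN
        · exact absurd htN hxN
        · exact hyz
        · exact hmeminv z y hyz
    · rintro ⟨hne, h | h | h⟩
      · exact ⟨hne, a, h.1, h.2⟩
      · exact ⟨hne, x, Subgroup.mem_zpowers x, h.2⟩
      · exact ⟨hne, y, h.2, Subgroup.mem_zpowers y⟩
  -- the chain assignment
  obtain ⟨ι, hι⟩ := Countable.exists_injective_nat G
  set C : G → Set G := fun x =>
    if x = 1 then {1}
    else if x = a ^ (2 * n) then {1, a ^ (2 * n)}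
    else if x ∈ N then
      {1, a ^ (2 * n)} ∪ {z | z ∈ N ∧ z ≠ 1 ∧ z ≠ a ^ (2 * n) ∧ ι z ≤ ι x}
    else if x * x = 1 then {1, x}
    else if ι x ≤ ι x⁻¹ then {1, a ^ (2 * n), x}
    else {1, a ^ (2 * n), x⁻¹, x} with hC
  have hC1 : C 1 = {1} := by simp [hC]
  have hCt : C (a ^ (2 * n)) = {1, a ^ (2 * n)} := by simp [hC, htne]
  have hCN : ∀ x : G, x ∈ N → x ≠ 1 → x ≠ a ^ (2 * n) →
      C x = {1, a ^ (2 * n)} ∪ {z | z ∈ N ∧ z ≠ 1 ∧ z ≠ a ^ (2 * n) ∧ ι z ≤ ι x} := by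
    intro x h h1 h2; simp [hC, h, h1, h2]
  have hCno2 : ∀ x : G, x ∉ N → x * x = 1 → C x = {1, x} := by
    intro x h hxx
    have h1 : x ≠ 1 := fun h' => h (by rw [h']; exact N.one_mem)
    have h2 : x ≠ a ^ (2 * n) := fun h' => h (by rw [h']; exact htN)
    simp [hC, h, h1, h2, hxx]
  have hCno4a : ∀ x : G, x ∉ N → x * x ≠ 1 → ι x ≤ ι x⁻¹ → C x = {1, a ^ (2 * n), x} := by
    intro x h hxx hle
    have h1 : x ≠ 1 := fun h' => h (by rw [h']; exact N.one_mem)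
    have h2 : x ≠ a ^ (2 * n) := fun h' => h (by rw [h']; exact htN)
    simp [hC, h, h1, h2, hxx, hle]
  have hCno4b : ∀ x : G, x ∉ N → x * x ≠ 1 → ¬ ι x ≤ ι x⁻¹ →
      C x = {1, a ^ (2 * n), x⁻¹, x} := by
    intro x h hxx hle
    have h1 : x ≠ 1 := fun h' => h (by rw [h']; exact N.one_mem)
    have h2 : x ≠ a ^ (2 * n) := fun h' => h (by rw [h']; exact htN)
    simp [hC, h, h1, h2, hxx, hle]
  have hone : ∀ v : G, (1 : G) ∈ C v := by
    intro v
    by_cases h1 : v = 1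
    · subst h1; rw [hC1]; exact rfl
    by_cases h2 : v = a ^ (2 * n)
    · subst h2; rw [hCt]; exact Or.inl rfl
    by_cases h3 : v ∈ N
    · rw [hCN v h3 h1 h2]; exact Or.inl (Or.inl rfl)
    by_cases h4 : v * v = 1
    · rw [hCno2 v h3 h4]; exact Or.inl rfl
    by_cases h5 : ι v ≤ ι v⁻¹
    · rw [hCno4a v h3 h4 h5]; exact Or.inl rfl
    · rw [hCno4b v h3 h4 h5]; exact Or.inl rfl
  have hmem : ∀ v : G, v ∈ C v := by
    intro v
    by_cases h1 : v = 1
    · subst h1; exact hone 1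
    by_cases h2 : v = a ^ (2 * n)
    · subst h2; rw [hCt]; exact Or.inr rfl
    by_cases h3 : v ∈ N
    · rw [hCN v h3 h1 h2]; exact Or.inr ⟨h3, h1, h2, le_refl _⟩
    by_cases h4 : v * v = 1
    · rw [hCno2 v h3 h4]; exact Or.inr rfl
    by_cases h5 : ι v ≤ ι v⁻¹
    · rw [hCno4a v h3 h4 h5]; exact Or.inr (Or.inr rfl)
    · rw [hCno4b v h3 h4 h5]; exact Or.inr (Or.inr (Or.inr rfl))
  -- each C v sits inside a cyclic subgroup
  have hCsub : ∀ v : G, ∃ w : G, C v ⊆ (Subgroup.zpowers w : Set G) := by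
    intro v
    by_cases h1 : v = 1
    · subst h1; rw [hC1]
      exact ⟨a, by intro z hz; rw [Set.mem_singleton_iff] at hz; rw [hz]; exact N.one_mem⟩
    by_cases h2 : v = a ^ (2 * n)
    · subst h2; rw [hCt]
      refine ⟨a, ?_⟩
      intro z hz
      rcases hz with rfl | hz
      · exact N.one_mem
      · rw [Set.mem_singleton_iff] at hz; rw [hz]; exact htN
    by_cases h3 : v ∈ N
    · rw [hCN v h3 h1 h2]
      refine ⟨a, ?_⟩
      intro z hz
      rcases hz with (rfl | hz) | hz
      · exact N.one_mem
      · rw [Set.mem_singleton_iff] at hz; rw [hz]; exact htN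
      · exact hz.1
    by_cases h4 : v * v = 1
    · rw [hCno2 v h3 h4]
      refine ⟨v, ?_⟩
      intro z hz
      rcases hz with rfl | hz
      · exact Subgroup.one_mem _
      · rw [Set.mem_singleton_iff] at hz; rw [hz]; exact Subgroup.mem_zpowers v
    have hvv : v * v = a ^ (2 * n) := (hx2 v h3).resolve_left h4
    have hvt : a ^ (2 * n) ∈ Subgroup.zpowers v := by
      rw [← hvv]; exact Subgroup.mul_mem _ (Subgroup.mem_zpowers v) (Subgroup.mem_zpowers v)
    by_cases h5 : ι v ≤ ι v⁻¹
    · rw [hCno4a v h3 h4 h5]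
      refine ⟨v, ?_⟩
      intro z hz
      rcases hz with rfl | rfl | hz
      · exact Subgroup.one_mem _
      · exact hvt
      · rw [Set.mem_singleton_iff] at hz; rw [hz]; exact Subgroup.mem_zpowers v
    · rw [hCno4b v h3 h4 h5]
      refine ⟨v, ?_⟩
      intro z hz
      rcases hz with rfl | rfl | rfl | hz
      · exact Subgroup.one_mem _
      · exact hvt
      · exact Subgroup.inv_mem _ (Subgroup.mem_zpowers v)
      · rw [Set.mem_singleton_iff] at hz; rw [hz]; exact Subgroup.mem_zpowers v
  have hclique : ∀ v : G, (C v).Pairwise (enhancedPowerGraph G).Adj := by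
    intro v
    obtain ⟨w, hw⟩ := hCsub v
    intro x hx y hy hne
    exact ⟨hne, w, hw hx, hw hy⟩
  -- the key adjacency condition, case: both in N
  have keyN : ∀ u v : G, u ≠ v → u ∈ N → v ∈ N →
      (C u ⊆ C v ∧ v ∉ C u) ∨ (C v ⊆ C u ∧ u ∉ C v) := by
    have main : ∀ u v : G, u ≠ v → u ∈ N → v ∈ N → u ≠ 1 → v ≠ 1 →
        u ≠ a ^ (2 * n) → v ≠ a ^ (2 * n) → ι u < ι v →
        (C u ⊆ C v ∧ v ∉ C u) := by
      intro u v hne huN hvN hu1 hv1 hut hvt hlt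
      rw [hCN u huN hu1 hut, hCN v hvN hv1 hvt]
      constructor
      · intro z hz
        rcases hz with hz | hz
        · exact Or.inl hz
        · exact Or.inr ⟨hz.1, hz.2.1, hz.2.2.1, le_trans hz.2.2.2 (le_of_lt hlt)⟩
      · intro hvm
        rcases hvm with (hv | hv) | hv
        · exact hv1 hv
        · rw [Set.mem_singleton_iff] at hv; exact hvt hv
        · exact absurd hv.2.2.2 (by omega)
    intro u v hne huN hvN
    by_cases hu1 : u = 1
    · subst hu1
      left
      rw [hC1]
      exact ⟨Set.singleton_subset_iff.mpr (hone v),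
        fun h => hne (Set.mem_singleton_iff.mp h).symm⟩
    by_cases hv1 : v = 1
    · subst hv1
      right
      rw [hC1]
      exact ⟨Set.singleton_subset_iff.mpr (hone u),
        fun h => hne (Set.mem_singleton_iff.mp h)⟩
    by_cases hut : u = a ^ (2 * n)
    · subst hut
      left
      rw [hCt, hCN v hvN hv1 (Ne.symm hne)]
      refine ⟨Set.subset_union_left, ?_⟩
      intro hv
      rcases hv with hv | hv
      · exact hv1 hv
      · rw [Set.mem_singleton_iff] at hv; exact hne hv.symm
    by_cases hvt : v = a ^ (2 * n)
    · subst hvt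
      right
      rw [hCt, hCN u huN hu1 hne]
      refine ⟨Set.subset_union_left, ?_⟩
      intro hu
      rcases hu with hu | hu
      · exact hu1 hu
      · rw [Set.mem_singleton_iff] at hu; exact hne hu
    have hii : ι u ≠ ι v := fun h => hne (hι h)
    rcases lt_or_gt_of_ne hii with h | h
    · exact Or.inl (main u v hne huN hvN hu1 hv1 hut hvt h)
    · exact Or.inr (main v u hne.symm hvN huN hv1 hu1 hvt hut h)
  -- key adjacency condition, case: u outside N and v a power of u
  have key : ∀ u v : G, u ≠ v → u ∉ N → v ∈ Subgroup.zpowers u →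
      (C u ⊆ C v ∧ v ∉ C u) ∨ (C v ⊆ C u ∧ u ∉ C v) := by
    intro u v hne huN hv
    have hu1 : u ≠ 1 := fun h => huN (by rw [h]; exact N.one_mem)
    have hut : u ≠ a ^ (2 * n) := fun h => huN (by rw [h]; exact htN)
    rcases hstruct u huN v hv with rfl | rfl | rfl | rfl
    · -- v = 1
      right
      rw [hC1]
      exact ⟨Set.singleton_subset_iff.mpr (hone u),
        fun h => hu1 (Set.mem_singleton_iff.mp h)⟩
    · -- v = a ^ (2n)
      have huu : u * u = a ^ (2 * n) := by
        rcases hx2 u huN with h | h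
        · exfalso
          obtain ⟨m, hm⟩ := Subgroup.mem_zpowers_iff.mp hv
          rcases order2pow u h m with h1 | h1
          · rw [hm] at h1; exact htne h1
          · rw [hm] at h1; exact hut h1.symm
        · exact h
      have huu1 : u * u ≠ 1 := by rw [huu]; exact htne
      right
      rw [hCt]
      have hsub : ({1, a ^ (2 * n)} : Set G) ⊆ C u ∧ u ∉ ({1, a ^ (2 * n)} : Set G) := by
        constructor
        · intro z hz
          by_cases h5 : ι u ≤ ι u⁻¹
          · rw [hCno4a u huN huu1 h5]
            rcases hz with hz | hz
            · exact Or.inl hz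
            · exact Or.inr (Or.inl (Set.mem_singleton_iff.mp hz))
          · rw [hCno4b u huN huu1 h5]
            rcases hz with hz | hz
            · exact Or.inl hz
            · exact Or.inr (Or.inl (Set.mem_singleton_iff.mp hz))
        · intro hu
          rcases hu with hu | hu
          · exact hu1 hu
          · exact hut (Set.mem_singleton_iff.mp hu)
      exact hsub
    · -- v = u
      exact absurd rfl hne
    · -- v = u⁻¹
      have huu : u * u ≠ 1 := by
        intro h
        exact hne (eq_inv_of_mul_eq_one_left h)
      have huu2 : u * u = a ^ (2 * n) := (hx2 u huN).resolve_left huu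
      have hvN' : u⁻¹ ∉ N := hinvN u huN
      have htinv : (a ^ (2 * n) : G)⁻¹ = a ^ (2 * n) := inv_eq_of_mul_eq_one_right ht2
      have hvv : u⁻¹ * u⁻¹ = a ^ (2 * n) := by
        rw [← mul_inv_rev, huu2, htinv]
      have hvv1 : u⁻¹ * u⁻¹ ≠ 1 := by rw [hvv]; exact htne
      have hii : ι u ≠ ι u⁻¹ := fun h => hne (hι h)
      have hv1 : u⁻¹ ≠ 1 := fun h => hu1 (by rw [← inv_inv u, h, inv_one])
      have hvt : u⁻¹ ≠ a ^ (2 * n) := fun h => hvN' (by rw [h]; exact htN)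
      rcases Nat.lt_or_ge (ι u) (ι u⁻¹) with hlt | hge
      · left
        rw [hCno4a u huN huu (le_of_lt hlt),
          hCno4b u⁻¹ hvN' hvv1 (by rw [inv_inv]; omega)]
        constructor
        · intro z hz
          rcases hz with hz | hz | hz
          · exact Or.inl hz
          · exact Or.inr (Or.inl hz)
          · rw [Set.mem_singleton_iff] at hz
            exact Or.inr (Or.inr (Or.inl (by rw [hz, inv_inv])))
        · intro hv'
          rcases hv' with hv' | hv' | hv'
          · exact hv1 hv'
          · exact hvt hv'
          · rw [Set.mem_singleton_iff] at hv'
            exact hne hv'.symm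
      · right
        rw [hCno4a u⁻¹ hvN' hvv1 (by rw [inv_inv]; omega),
          hCno4b u huN huu (by omega)]
        constructor
        · intro z hz
          rcases hz with hz | hz | hz
          · exact Or.inl hz
          · exact Or.inr (Or.inl hz)
          · rw [Set.mem_singleton_iff] at hz
            exact Or.inr (Or.inr (Or.inl hz))
        · intro hu'
          rcases hu' with hu' | hu' | hu'
          · exact hu1 hu'
          · exact hut hu'
          · rw [Set.mem_singleton_iff] at hu'
            exact hne hu'
  -- assemble
  apply perfect_of_chains (enhancedPowerGraph G) C hmem hclique
  intro u v huv
  rw [hadj_iff] at huv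
  obtain ⟨hne, hcase⟩ := huv
  rcases hcase with ⟨h1, h2⟩ | ⟨h1, h2⟩ | ⟨h1, h2⟩
  · exact keyN u v hne h1 h2
  · exact key u v hne h1 h2
  · exact (key v u hne.symm h1 h2).symm
end
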